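/- arXiv:2509.03190 — 6 statements merged into one kernel-verified Lean document; each statement's English description precedes it below -/
import Mathlib

section
/- If T is nonempty, then G has a pair of comparable vertices; more precisely, any vertex t with N(t) ⊆ Z has its neighborhood contained in the neighborhood of v₁, where Z is complete to C. -/
open SimpleGraph

/-- A proper coloring of `G` with colors in `Fin ℓ`. -/
def IsProperColoring {V : Type*} (G : SimpleGraph V) (ℓ : ℕ) (f : V → Fin ℓ) : Prop :=
  ∀ ⦃a b : V⦄, G.Adj a b → f a ≠ f b

/-- A walk in the reconfiguration graph `R_ℓ(G)`: a sequence `c 0, c 1, …, c m` of proper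
`ℓ`-colorings of `G` in which consecutive colorings differ on at most one vertex. -/
def IsRecolorSeq {V : Type*} (G : SimpleGraph V) (ℓ m : ℕ) (c : ℕ → V → Fin ℓ) : Prop :=
  (∀ i ≤ m, IsProperColoring G ℓ (c i)) ∧
    ∀ i < m, ∀ a b : V, a ≠ b → c i a ≠ c (i + 1) a → c i b = c (i + 1) b

/-- The number of times the vertex `a` is recolored along the sequence `c 0, …, c m`. -/
def recolorCount {V : Type*} {ℓ : ℕ} (m : ℕ) (c : ℕ → V → Fin ℓ) (a : V) : ℕ :=
  ((Finset.range m).filter fun i => c i a ≠ c (i + 1) a).card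

/-- The cycle `Cₙ` on `Fin n` (for `n ≥ 3`). -/
def cyc (n : ℕ) [NeZero n] : SimpleGraph (Fin n) := SimpleGraph.fromRel fun a b => a + 1 = b

/-- The graph `P₂ + P₃`, the disjoint union of an edge and a path on three vertices. -/
def p2p3 : SimpleGraph (Fin 5) := SimpleGraph.fromRel fun a b =>
  (a = 0 ∧ b = 1) ∨ (a = 2 ∧ b = 3) ∨ (a = 3 ∧ b = 4)


lemma mk_p2p3 {V : Type*} {G : SimpleGraph V} {a b c d e : V}
    (hab : G.Adj a b) (hcd : G.Adj c d) (hde : G.Adj d e)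
    (hce : ¬ G.Adj c e) (hac : ¬ G.Adj a c) (had : ¬ G.Adj a d) (hae : ¬ G.Adj a e)
    (hbc : ¬ G.Adj b c) (hbd : ¬ G.Adj b d) (hbe : ¬ G.Adj b e)
    (nac : a ≠ c) (nad : a ≠ d) (nae : a ≠ e) (nbc : b ≠ c) (nbd : b ≠ d) (nbe : b ≠ e)
    (nce : c ≠ e) : Nonempty (p2p3 ↪g G) := by
  have nab : a ≠ b := hab.ne
  have ncd : c ≠ d := hcd.ne
  have nde : d ≠ e := hde.ne
  refine ⟨⟨⟨![a,b,c,d,e], ?_⟩, ?_⟩⟩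
  · intro i j hij
    fin_cases i <;> fin_cases j <;> simp_all <;> simp_all [eq_comm]
  · intro i j
    change G.Adj (![a,b,c,d,e] i) (![a,b,c,d,e] j) ↔ _
    fin_cases i <;> fin_cases j <;>
      simp_all [p2p3, SimpleGraph.fromRel_adj, G.adj_comm] <;> try decide

lemma mk_c4 {V : Type*} {G : SimpleGraph V} {a b c d : V}
    (hab : G.Adj a b) (hbc : G.Adj b c) (hcd : G.Adj c d) (hda : G.Adj d a)
    (hac : ¬ G.Adj a c) (hbd : ¬ G.Adj b d) (nac : a ≠ c) (nbd : b ≠ d) :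
    Nonempty (cyc 4 ↪g G) := by
  have nab : a ≠ b := hab.ne
  have nbc : b ≠ c := hbc.ne
  have ncd : c ≠ d := hcd.ne
  have nda : d ≠ a := hda.ne
  refine ⟨⟨⟨![a,b,c,d], ?_⟩, ?_⟩⟩
  · intro i j hij
    fin_cases i <;> fin_cases j <;> simp_all <;> simp_all [eq_comm]
  · intro i j
    change G.Adj (![a,b,c,d] i) (![a,b,c,d] j) ↔ _
    fin_cases i <;> fin_cases j <;>
      simp_all [cyc, SimpleGraph.fromRel_adj, G.adj_comm] <;> try exact hda.symm

section keysec
variable {V : Type*} (G : SimpleGraph V)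

lemma fin5_arith : ∀ (j a b c : Fin 5), a + b = c → j + a + b = j + c := by
  intro j a b c h; rw [add_assoc, h]

lemma key_lemma {V : Type*} {G : SimpleGraph V}
    (hP : ¬ Nonempty (p2p3 ↪g G)) (hC4 : ¬ Nonempty (cyc 4 ↪g G))
    (v : Fin 5 → V) (hv : Function.Injective v)
    (hC : ∀ i j, G.Adj (v i) (v j) ↔ (cyc 5).Adj i j) :
    ∀ t, (∀ i, t ≠ v i) → (∀ i, ¬ G.Adj t (v i)) →
      ∀ x, G.Adj t x → ∀ j, G.Adj x (v j) := by
  have f1 : ∀ i : Fin 5, i ≠ i + 1 := by decide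
  have f2 : ∀ k : Fin 5, ¬(k + 1 = k + 2 ∨ k + 2 + 1 = k) := by decide
  have f3 : ∀ k : Fin 5, k ≠ k + 2 := by decide
  have f4 : ∀ k : Fin 5, ¬(k + 3 + 1 = k + 1 ∨ k + 1 + 1 = k + 3) := by decide
  have f5 : ∀ k : Fin 5, ¬(k + 4 + 1 = k + 1 ∨ k + 1 + 1 = k + 4) := by decide
  have f6 : ∀ k : Fin 5, k + 3 ≠ k + 1 := by decide
  have f7 : ∀ k : Fin 5, k + 4 ≠ k + 1 := by decide
  have cyc5_adj : ∀ i : Fin 5, G.Adj (v i) (v (i+1)) := by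
    intro i
    rw [hC]
    exact ⟨f1 i, Or.inl rfl⟩
  have cyc5_nonadj : ∀ i j : Fin 5, ¬(i + 1 = j ∨ j + 1 = i) → ¬ G.Adj (v i) (v j) := by
    intro i j h hadj
    rw [hC] at hadj
    simp only [cyc, SimpleGraph.fromRel_adj] at hadj
    exact h hadj.2
  have nonadj2 : ∀ k : Fin 5, ¬ G.Adj (v k) (v (k+2)) :=
    fun k => cyc5_nonadj k (k+2) (f2 k)
  have ne2 : ∀ k : Fin 5, v k ≠ v (k+2) :=
    fun k h => absurd (hv h) (f3 k)
  have adj11 : ∀ k : Fin 5, G.Adj (v (k+1)) (v (k+2)) := by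
    intro k
    have := cyc5_adj (k+1)
    rwa [fin5_arith k 1 1 2 (by decide)] at this
  intro t ht1 ht2 x htx
  have hxv : ∀ i, x ≠ v i := fun i h => ht2 i (h ▸ htx)
  have triple : ∀ k : Fin 5, G.Adj x (v k) ∨ G.Adj x (v (k+1)) ∨ G.Adj x (v (k+2)) := by
    intro k
    by_contra hcon
    push_neg at hcon
    obtain ⟨h1, h2, h3⟩ := hcon
    exact hP (mk_p2p3 (a := t) (b := x) (c := v k) (d := v (k+1)) (e := v (k+2))
      htx (cyc5_adj k) (adj11 k) (nonadj2 k) (ht2 k) (ht2 _) (ht2 _) h1 h2 h3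
      (ht1 k) (ht1 _) (ht1 _) (hxv k) (hxv _) (hxv _) (ne2 k))
  have closure : ∀ k : Fin 5, G.Adj x (v k) → G.Adj x (v (k+2)) → G.Adj x (v (k+1)) := by
    intro k h1 h2
    by_contra h3
    exact hC4 (mk_c4 (a := x) (b := v k) (c := v (k+1)) (d := v (k+2))
      h1 (cyc5_adj k) (adj11 k) h2.symm h3 (nonadj2 k) (hxv _) (ne2 k))
  have rule3 : ∀ k : Fin 5, G.Adj x (v k) → G.Adj x (v (k+1)) → G.Adj x (v (k+2)) →
      G.Adj x (v (k+3)) ∨ G.Adj x (v (k+4)) := by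
    intro k h1 h2 h3
    by_contra hcon
    push_neg at hcon
    obtain ⟨h4, h5⟩ := hcon
    have e34 : G.Adj (v (k+3)) (v (k+4)) := by
      have := cyc5_adj (k+3)
      rwa [fin5_arith k 3 1 4 (by decide)] at this
    have n31 : ¬ G.Adj (v (k+3)) (v (k+1)) :=
      cyc5_nonadj (k+3) (k+1) (f4 k)
    have n41 : ¬ G.Adj (v (k+4)) (v (k+1)) :=
      cyc5_nonadj (k+4) (k+1) (f5 k)
    exact hP (mk_p2p3 (a := v (k+3)) (b := v (k+4)) (c := t) (d := x) (e := v (k+1))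
      e34 htx h2
      (ht2 _)
      (fun h => ht2 _ h.symm) (fun h => h4 h.symm) n31
      (fun h => ht2 _ h.symm) (fun h => h5 h.symm) n41
      (Ne.symm (ht1 _)) (Ne.symm (hxv _)) (fun h => absurd (hv h) (f6 k))
      (Ne.symm (ht1 _)) (Ne.symm (hxv _)) (fun h => absurd (hv h) (f7 k))
      (ht1 _))
  intro j
  by_contra P0
  by_cases P4 : G.Adj x (v (j+4))
  · have nP1 : ¬ G.Adj x (v (j+1)) := by
      intro h1
      have h1' : G.Adj x (v (j+4+2)) := by rwa [fin5_arith j 4 2 1 (by decide)]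
      have := closure (j+4) P4 h1'
      rw [fin5_arith j 4 1 0 (by decide), add_zero] at this
      exact P0 this
    have P3 : G.Adj x (v (j+3)) := by
      have T1 := triple (j+1)
      rw [fin5_arith j 1 1 2 (by decide), fin5_arith j 1 2 3 (by decide)] at T1
      rcases T1 with h | h | h
      · exact absurd h nP1
      · have P4' : G.Adj x (v (j+2+2)) := by rwa [fin5_arith j 2 2 4 (by decide)]
        have := closure (j+2) h P4'
        rwa [fin5_arith j 2 1 3 (by decide)] at this
      · exact h
    by_cases P2 : G.Adj x (v (j+2))
    · have P3' : G.Adj x (v (j+2+1)) := by rwa [fin5_arith j 2 1 3 (by decide)]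
      have P4' : G.Adj x (v (j+2+2)) := by rwa [fin5_arith j 2 2 4 (by decide)]
      have R := rule3 (j+2) P2 P3' P4'
      rw [fin5_arith j 2 3 0 (by decide), add_zero, fin5_arith j 2 4 1 (by decide)] at R
      exact R.elim P0 nP1
    · have T0 := triple j
      exact T0.elim P0 (fun h => h.elim nP1 P2)
  · have P3 : G.Adj x (v (j+3)) := by
      have T3 := triple (j+3)
      rw [fin5_arith j 3 1 4 (by decide), fin5_arith j 3 2 0 (by decide), add_zero] at T3
      rcases T3 with h | h | h
      · exact h
      · exact absurd h P4
      · exact absurd h P0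
    have P1 : G.Adj x (v (j+1)) := by
      have T4 := triple (j+4)
      rw [fin5_arith j 4 1 0 (by decide), add_zero, fin5_arith j 4 2 1 (by decide)] at T4
      rcases T4 with h | h | h
      · exact absurd h P4
      · exact absurd h P0
      · exact h
    have P2 : G.Adj x (v (j+2)) := by
      have P3' : G.Adj x (v (j+1+2)) := by rwa [fin5_arith j 1 2 3 (by decide)]
      have := closure (j+1) P1 P3'
      rwa [fin5_arith j 1 1 2 (by decide)] at this
    have P2' : G.Adj x (v (j+1+1)) := by rwa [fin5_arith j 1 1 2 (by decide)]
    have P3' : G.Adj x (v (j+1+2)) := by rwa [fin5_arith j 1 2 3 (by decide)]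
    have R := rule3 (j+1) P1 P2' P3'
    rw [fin5_arith j 1 3 4 (by decide), fin5_arith j 1 4 0 (by decide), add_zero] at R
    exact R.elim P4 P0

end keysec

/-- in a `(P₂+P₃, C₄)`-free graph with an induced 5-cycle `v 0 … v 4`,
if the set `T` of vertices outside the cycle with no neighbor on it is nonempty, then `G`
has a pair of comparable vertices; more precisely, any vertex `t` outside the cycle with no
neighbor on the cycle and with all its neighbors in `Z` (the vertices adjacent to all of the
cycle) has its neighborhood contained in that of `v 0`. -/
theorem stmt0 {V : Type*} (G : SimpleGraph V)
    (hP : ¬ Nonempty (p2p3 ↪g G)) (hC4 : ¬ Nonempty (cyc 4 ↪g G))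
    (v : Fin 5 → V) (hv : Function.Injective v)
    (hC : ∀ i j, G.Adj (v i) (v j) ↔ (cyc 5).Adj i j) :
    ((∃ t, (∀ i, t ≠ v i) ∧ ∀ i, ¬ G.Adj t (v i)) →
      ∃ x y : V, x ≠ y ∧ ¬ G.Adj x y ∧
        ((∀ w, G.Adj x w → G.Adj y w) ∨ ∀ w, G.Adj y w → G.Adj x w)) ∧
    (∀ t, (∀ i, t ≠ v i) → (∀ i, ¬ G.Adj t (v i)) →
      (∀ x, G.Adj t x → ((∀ i, x ≠ v i) ∧ ∀ i, G.Adj x (v i))) →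
      ∀ x, G.Adj t x → G.Adj (v 0) x) := by
  constructor
  · rintro ⟨t, ht1, ht2⟩
    refine ⟨t, v 0, ht1 0, ht2 0, Or.inl ?_⟩
    intro w hw
    exact (key_lemma hP hC4 v hv hC t ht1 ht2 w hw 0).symm
  · intro t ht1 ht2 hZ x hx
    exact ((hZ x hx).2 0).symm
end

section
/- In a (P₂+P₃, C₄)-free graph G containing an induced 5-cycle C = v₁v₂v₃v₄v₅, the set Z of vertices outside C adjacent to all of C is a clique, and Z is complete to C and to D, where D is the set of vertices outside C with exactly three consecutive neighbors on C. -/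
open SimpleGraph

/-- Membership in `Z`: a vertex outside the 5-cycle adjacent to all of it. -/
def inZ5 {V : Type*} (G : SimpleGraph V) (v : Fin 5 → V) (z : V) : Prop :=
  (∀ i, z ≠ v i) ∧ ∀ i, G.Adj z (v i)

/-- Membership in `D`: a vertex outside the 5-cycle whose neighbors on the cycle are
exactly three consecutive vertices `v (i-1), v i, v (i+1)`. -/
def inD5 {V : Type*} (G : SimpleGraph V) (v : Fin 5 → V) (d : V) : Prop :=
  (∀ i, d ≠ v i) ∧ ∃ i : Fin 5, ∀ j, G.Adj d (v j) ↔ (j = i - 1 ∨ j = i ∨ j = i + 1)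

instance {n : ℕ} [NeZero n] : DecidableRel (cyc n).Adj := fun a b =>
  decidable_of_iff (a ≠ b ∧ (a + 1 = b ∨ b + 1 = a))
    (by rw [cyc, SimpleGraph.fromRel_adj])

lemma c4_embed {V : Type*} (G : SimpleGraph V) (a b c d : V)
    (hab : G.Adj a b) (hbc : G.Adj b c) (hcd : G.Adj c d) (hda : G.Adj d a)
    (hac : ¬ G.Adj a c) (hbd : ¬ G.Adj b d)
    (hac' : a ≠ c) (hbd' : b ≠ d) : Nonempty (cyc 4 ↪g G) := by
  have nab := hab.ne
  have nbc := hbc.ne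
  have ncd := hcd.ne
  have nda := hda.ne
  have hca : ¬ G.Adj c a := fun h' => hac h'.symm
  have hdb : ¬ G.Adj d b := fun h' => hbd h'.symm
  refine ⟨⟨⟨![a,b,c,d], ?_⟩, ?_⟩⟩
  · intro i j h
    fin_cases i <;> fin_cases j <;> simp_all <;>
      first | rfl | (exfalso; exact hac' h.symm) | (exfalso; exact hbd' h.symm)
  · intro i j
    fin_cases i <;> fin_cases j <;>
      simp [cyc, fromRel_adj, hab, hbc, hcd, hda, hac, hbd,
        hab.symm, hbc.symm, hcd.symm, hda.symm, hca, hdb, G.irrefl, DFunLike.coe] <;> decide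

/-- in a `(P₂+P₃, C₄)`-free graph with an induced 5-cycle, `Z` is a clique,
`Z` is complete to the cycle, and `Z` is complete to `D`. -/
theorem stmt1 {V : Type*} (G : SimpleGraph V)
    (hP : ¬ Nonempty (p2p3 ↪g G)) (hC4 : ¬ Nonempty (cyc 4 ↪g G))
    (v : Fin 5 → V) (hv : Function.Injective v)
    (hC : ∀ i j, G.Adj (v i) (v j) ↔ (cyc 5).Adj i j) :
    (∀ z₁ z₂, inZ5 G v z₁ → inZ5 G v z₂ → z₁ ≠ z₂ → G.Adj z₁ z₂) ∧
    (∀ z, inZ5 G v z → ∀ i, G.Adj z (v i)) ∧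
    (∀ z d, inZ5 G v z → inD5 G v d → G.Adj z d) := by
  refine ⟨?_, fun z hz i => hz.2 i, ?_⟩
  · intro z₁ z₂ hz1 hz2 hne
    by_contra h
    exact hC4 (c4_embed G z₁ (v 0) z₂ (v 2) (hz1.2 0) (hz2.2 0).symm (hz2.2 2)
      (hz1.2 2).symm h (by rw [hC]; decide) hne (hv.ne (by decide)))
  · intro z d hz hd
    obtain ⟨hdnv, i, hi⟩ := hd
    by_contra h
    have hvne : ∀ k : Fin 5, (k - 1 : Fin 5) ≠ k + 1 := by decide
    have hcyc : ∀ k : Fin 5, ¬ (cyc 5).Adj (k - 1) (k + 1) := by decide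
    have hkey : ∀ k : Fin 5, ¬ (k + 2 = k - 1 ∨ k + 2 = k ∨ k + 2 = k + 1) := by decide
    have hzd : z ≠ d := by
      intro he
      exact hkey i ((hi (i + 2)).mp (he ▸ hz.2 (i + 2)))
    exact hC4 (c4_embed G d (v (i - 1)) z (v (i + 1))
      ((hi (i - 1)).mpr (Or.inl rfl)) (hz.2 (i - 1)).symm (hz.2 (i + 1))
      ((hi (i + 1)).mpr (Or.inr (Or.inr rfl))).symm
      (fun h' => h h'.symm) (by rw [hC]; exact hcyc i) (Ne.symm hzd) (hv.ne (hvne i)))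
end

section
/- Let G be any graph from the class H₁ with |S| ≥ 2. Then χ(G) = |S| + 1 if |S| ≥ 3, and χ(G) = 4 if |S| = 2; in both cases χ(G − {u₃,u₄,u₆}) = χ(G) − 1. -/
open SimpleGraph

/-- The six edges among the special vertices `u₁,…,u₆` (as `0,…,5`) of a graph in `H₁`:
`u₁u₂, u₂u₃, u₁u₄, u₁u₅, u₂u₅, u₅u₆`. -/
def h1edges : List (Fin 6 × Fin 6) := [(0, 1), (1, 2), (0, 3), (0, 4), (1, 4), (4, 5)]

/-- The class `H₁`: the vertex set is partitioned into six vertices `u 0, …, u 5`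
(`u₁,…,u₆` in the paper) and a nonempty clique `S`; the edges among the `u i` are exactly
`u₁u₂, u₂u₃, u₁u₄, u₁u₅, u₂u₅, u₅u₆`; `S` is complete to `{u₃, u₄, u₆}`; no other edges. -/
structure H1Data {V : Type*} (G : SimpleGraph V) where
  u : Fin 6 → V
  S : Finset V
  inj : Function.Injective u
  notin : ∀ i, u i ∉ S
  Sne : S.Nonempty
  cover : ∀ x : V, x ∈ S ∨ ∃ i, x = u i
  adj_iff : ∀ x y : V, G.Adj x y ↔ x ≠ y ∧
    ((x ∈ S ∧ y ∈ S) ∨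
     (∃ i j : Fin 6, x = u i ∧ y = u j ∧ ((i, j) ∈ h1edges ∨ (j, i) ∈ h1edges)) ∨
     (x ∈ S ∧ (y = u 2 ∨ y = u 3 ∨ y = u 5)) ∨
     (y ∈ S ∧ (x = u 2 ∨ x = u 3 ∨ x = u 5)))

lemma chrom_eq {W : Type*} {G : SimpleGraph W} {k : ℕ} (h1 : G.Colorable k)
    (h2 : ¬ G.Colorable (k-1)) : G.chromaticNumber = k := by
  refine le_antisymm h1.chromaticNumber_le ?_
  rw [chromaticNumber]
  refine le_iInf₂ fun m hm => ?_
  rw [Nat.cast_le]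
  by_contra hlt
  exact h2 (hm.mono (by omega))

set_option synthInstance.maxSize 1000 in
set_option maxHeartbeats 1000000 in
lemma key3 : ∀ (xa xb x0 x1 x2 x3 x4 x5 : Fin 3), xa ≠ xb → x2 ≠ xa → x2 ≠ xb →
    x3 ≠ xa → x3 ≠ xb → x5 ≠ xa → x5 ≠ xb → x0 ≠ x1 → x0 ≠ x4 → x1 ≠ x4 →
    x0 ≠ x3 → x1 ≠ x2 → x4 ≠ x5 → False := by decide

lemma key2 : ∀ x0 x1 x4 : Fin 2, x0 ≠ x1 → x0 ≠ x4 → x1 ≠ x4 → False := by decide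

lemma h1edges_ne : ∀ i j : Fin 6, (i, j) ∈ h1edges → i ≠ j := by decide

def cG (n : ℕ) (hn : 3 ≤ n) (i : Fin 6) : Fin (n+1) :=
  if i = 0 then ⟨0, by omega⟩ else if i = 1 then ⟨1, by omega⟩
  else if i = 4 then ⟨2, by omega⟩ else ⟨n, by omega⟩

lemma cG_edge (n : ℕ) (hn : 3 ≤ n) {i j : Fin 6}
    (hij : (i,j) ∈ h1edges ∨ (j,i) ∈ h1edges) : cG n hn i ≠ cG n hn j := by
  rcases hij with hij | hij <;>
    simp only [h1edges, List.mem_cons, List.mem_singleton, Prod.mk.injEq,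
      List.not_mem_nil, or_false] at hij <;>
    rcases hij with ⟨rfl,rfl⟩|⟨rfl,rfl⟩|⟨rfl,rfl⟩|⟨rfl,rfl⟩|⟨rfl,rfl⟩|⟨rfl,rfl⟩ <;>
    simp (config := { decide := true }) [cG, Fin.ext_iff] <;> omega

lemma cG_u235 (n : ℕ) (hn : 3 ≤ n) {i : Fin 6} (hi : i = 2 ∨ i = 3 ∨ i = 5) :
    (cG n hn i).val = n := by
  rcases hi with rfl | rfl | rfl <;> simp (config := { decide := true }) [cG]

def cH (n : ℕ) (hn : 3 ≤ n) (i : Fin 6) : Fin n :=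
  if i = 1 then ⟨1, by omega⟩ else if i = 4 then ⟨2, by omega⟩ else ⟨0, by omega⟩

open Classical in
noncomputable def H1Data.idx {V : Type*} {G : SimpleGraph V} (h : H1Data G) (x : V) :
    Fin 6 := if hx : ∃ i, x = h.u i then hx.choose else 0

lemma H1Data.idx_u {V : Type*} {G : SimpleGraph V} (h : H1Data G) (i : Fin 6) :
    h.idx (h.u i) = i := by
  unfold H1Data.idx
  split
  · next hx => exact (h.inj hx.choose_spec).symm
  · next hx => exact absurd ⟨i, rfl⟩ hx

open Classical in
noncomputable def fG {V : Type*} {G : SimpleGraph V} (h : H1Data G) (n : ℕ) (hn : 3 ≤ n)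
    (g : h.S → Fin n) (x : V) : Fin (n+1) :=
  if hx : x ∈ h.S then (g ⟨x, hx⟩).castSucc else cG n hn (h.idx x)

lemma fG_u {V : Type*} {G : SimpleGraph V} (h : H1Data G) (n : ℕ) (hn : 3 ≤ n)
    (g : h.S → Fin n) (i : Fin 6) : fG h n hn g (h.u i) = cG n hn i := by
  unfold fG
  rw [dif_neg (h.notin i), h.idx_u]

lemma fG_S {V : Type*} {G : SimpleGraph V} (h : H1Data G) (n : ℕ) (hn : 3 ≤ n)
    (g : h.S → Fin n) (x : V) (hx : x ∈ h.S) :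
    fG h n hn g x = (g ⟨x, hx⟩).castSucc := by
  unfold fG; rw [dif_pos hx]

open Classical in
noncomputable def fH {V : Type*} {G : SimpleGraph V} (h : H1Data G) (n : ℕ) (hn : 3 ≤ n)
    (g : h.S → Fin n) (x : V) : Fin n :=
  if hx : x ∈ h.S then g ⟨x, hx⟩ else cH n hn (h.idx x)

lemma fH_u {V : Type*} {G : SimpleGraph V} (h : H1Data G) (n : ℕ) (hn : 3 ≤ n)
    (g : h.S → Fin n) (i : Fin 6) : fH h n hn g (h.u i) = cH n hn i := by
  unfold fH
  rw [dif_neg (h.notin i), h.idx_u]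

lemma fH_S {V : Type*} {G : SimpleGraph V} (h : H1Data G) (n : ℕ) (hn : 3 ≤ n)
    (g : h.S → Fin n) (x : V) (hx : x ∈ h.S) : fH h n hn g x = g ⟨x, hx⟩ := by
  unfold fH; rw [dif_pos hx]


/-- for `G ∈ H₁` with `|S| ≥ 2`: `χ(G) = |S| + 1` if `|S| ≥ 3`, `χ(G) = 4`
if `|S| = 2`, and in both cases `χ(G − {u₃, u₄, u₆}) = χ(G) − 1`. -/
theorem stmt4 {V : Type*} [Fintype V] {G : SimpleGraph V} (h : H1Data G)
    (h2 : 2 ≤ h.S.card) :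
    (3 ≤ h.S.card → G.chromaticNumber = ((h.S.card + 1 : ℕ) : ℕ∞)) ∧
    (h.S.card = 2 → G.chromaticNumber = (4 : ℕ∞)) ∧
    G.chromaticNumber =
      (G.induce {x : V | x ≠ h.u 2 ∧ x ≠ h.u 3 ∧ x ≠ h.u 5}).chromaticNumber + 1 := by
  classical
  set s := h.S.card with hs
  set n := max s 3 with hn
  have hsn : s ≤ n := le_max_left _ _
  have hn3 : 3 ≤ n := le_max_right _ _
  set A : Set V := {x : V | x ≠ h.u 2 ∧ x ≠ h.u 3 ∧ x ≠ h.u 5} with hA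
  -- basic adjacency facts
  have adjU : ∀ i j : Fin 6, ((i,j) ∈ h1edges ∨ (j,i) ∈ h1edges) → G.Adj (h.u i) (h.u j) := by
    intro i j hm
    have hij : i ≠ j := by
      rcases hm with hm | hm
      · exact h1edges_ne i j hm
      · exact (h1edges_ne j i hm).symm
    exact (h.adj_iff _ _).mpr ⟨fun e => hij (h.inj e), Or.inr (Or.inl ⟨i, j, rfl, rfl, hm⟩)⟩
  have adjS : ∀ x ∈ h.S, ∀ y ∈ h.S, x ≠ y → G.Adj x y := fun x hx y hy hne =>
    (h.adj_iff x y).mpr ⟨hne, Or.inl ⟨hx, hy⟩⟩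
  have adjSu : ∀ x ∈ h.S, ∀ i : Fin 6, (i = 2 ∨ i = 3 ∨ i = 5) → G.Adj x (h.u i) := by
    intro x hx i hi
    refine (h.adj_iff _ _).mpr ⟨fun e => h.notin i (e ▸ hx), Or.inr (Or.inr (Or.inl ⟨hx, ?_⟩))⟩
    rcases hi with rfl | rfl | rfl <;> simp
  -- the injection of S into Fin n
  set g : h.S → Fin n := fun x => Fin.castLE hsn (h.S.equivFin x) with hg
  have ginj : Function.Injective g := fun x y e =>
    h.S.equivFin.injective (Fin.castLE_injective hsn e)
  have gval : ∀ x, (g x).val < s := fun x => by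
    simpa [hg] using (h.S.equivFin x).isLt
  -- ================ upper bound for G ================
  have hGcol : G.Colorable (n+1) := by
    refine ⟨Coloring.mk (fG h n hn3 g) ?_⟩
    intro a b hab
    rw [h.adj_iff] at hab
    obtain ⟨hne, hcase⟩ := hab
    rcases hcase with ⟨ha, hb⟩ | ⟨i, j, rfl, rfl, hij⟩ | ⟨ha, hb⟩ | ⟨hb, ha⟩
    · rw [fG_S h n hn3 g a ha, fG_S h n hn3 g b hb]
      intro e
      exact hne (congrArg Subtype.val (ginj (Fin.castSucc_injective _ e)))
    · rw [fG_u, fG_u]; exact cG_edge n hn3 hij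
    · rw [fG_S h n hn3 g a ha]
      intro e
      have hbv : (fG h n hn3 g b).val = n := by
        rcases hb with rfl | rfl | rfl <;> rw [fG_u] <;> exact cG_u235 n hn3 (by tauto)
      have := congrArg Fin.val e
      rw [hbv] at this
      simp only [Fin.coe_castSucc] at this
      have := gval ⟨a, ha⟩
      omega
    · rw [fG_S h n hn3 g b hb]
      intro e
      have hav : (fG h n hn3 g a).val = n := by
        rcases ha with rfl | rfl | rfl <;> rw [fG_u] <;> exact cG_u235 n hn3 (by tauto)
      have := congrArg Fin.val e
      rw [hav] at this
      simp only [Fin.coe_castSucc] at this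
      have := gval ⟨b, hb⟩
      omega
  -- ================ lower bound for G ================
  have hGnot : ¬ G.Colorable n := by
    rintro ⟨C⟩
    have hinj : Set.InjOn C h.S := fun x hx y hy e => by
      by_contra hne
      exact C.valid (adjS x hx y hy hne) e
    have hcardT : (h.S.image C).card = s := Finset.card_image_of_injOn hinj
    have hnotT : ∀ i : Fin 6, (i = 2 ∨ i = 3 ∨ i = 5) → C (h.u i) ∉ h.S.image C := by
      intro i hi hmem
      obtain ⟨x, hx, he⟩ := Finset.mem_image.mp hmem
      exact C.valid (adjSu x hx i hi) he
    rcases Nat.lt_or_ge s 3 with hs2 | hs3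
    · -- s = 2, n = 3
      have hs2' : s = 2 := le_antisymm (by omega) h2
      have hn3' : n = 3 := by rw [hn, hs2']; rfl
      obtain ⟨a, b, hab, hSab⟩ := Finset.card_eq_two.mp (hs.symm.trans hs2')
      have ha : a ∈ h.S := by rw [hSab]; simp
      have hb : b ∈ h.S := by rw [hSab]; simp
      rw [hn3'] at C
      have hCab : C a ≠ C b := C.valid (adjS a ha b hb hab)
      have hCa : ∀ i : Fin 6, (i = 2 ∨ i = 3 ∨ i = 5) → C (h.u i) ≠ C a ∧ C (h.u i) ≠ C b := by
        intro i hi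
        constructor <;> intro e
        · exact C.valid (adjSu a ha i hi) e.symm
        · exact C.valid (adjSu b hb i hi) e.symm
      obtain ⟨h2a, h2b⟩ := hCa 2 (by tauto)
      obtain ⟨h3a, h3b⟩ := hCa 3 (by tauto)
      obtain ⟨h5a, h5b⟩ := hCa 5 (by tauto)
      have e01 : C (h.u 0) ≠ C (h.u 1) := C.valid (adjU 0 1 (Or.inl (by decide)))
      have e04 : C (h.u 0) ≠ C (h.u 4) := C.valid (adjU 0 4 (Or.inl (by decide)))
      have e14 : C (h.u 1) ≠ C (h.u 4) := C.valid (adjU 1 4 (Or.inl (by decide)))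
      have e03 : C (h.u 0) ≠ C (h.u 3) := C.valid (adjU 0 3 (Or.inl (by decide)))
      have e12 : C (h.u 1) ≠ C (h.u 2) := C.valid (adjU 1 2 (Or.inl (by decide)))
      have e45 : C (h.u 4) ≠ C (h.u 5) := C.valid (adjU 4 5 (Or.inl (by decide)))
      exact key3 (C a) (C b) (C (h.u 0)) (C (h.u 1)) (C (h.u 2)) (C (h.u 3)) (C (h.u 4))
        (C (h.u 5)) hCab h2a h2b h3a h3b h5a h5b e01 e04 e14 e03 e12 e45
    · -- s ≥ 3, n = s
      have hns : n = s := max_eq_left hs3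
      have huniv : h.S.image C = Finset.univ :=
        Finset.eq_univ_of_card _ (by rw [hcardT, Fintype.card_fin, hns])
      exact hnotT 2 (by tauto) (huniv ▸ Finset.mem_univ _)
  -- ================ membership facts for A ================
  have hmemA : ∀ x ∈ h.S, x ∈ A := by
    intro x hx
    exact ⟨fun e => h.notin 2 (e ▸ hx), fun e => h.notin 3 (e ▸ hx), fun e => h.notin 5 (e ▸ hx)⟩
  have huA : ∀ i : Fin 6, (i = 0 ∨ i = 1 ∨ i = 4) → h.u i ∈ A := by
    intro i hi
    refine ⟨fun e => ?_, fun e => ?_, fun e => ?_⟩ <;>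
      · have := h.inj e
        rcases hi with rfl | rfl | rfl <;> simp_all
  have hidxA : ∀ (x : A) (i : Fin 6), (x : V) = h.u i → i ≠ 2 ∧ i ≠ 3 ∧ i ≠ 5 := by
    rintro ⟨x, hx2, hx3, hx5⟩ i rfl
    exact ⟨fun e => hx2 (by rw [e]), fun e => hx3 (by rw [e]), fun e => hx5 (by rw [e])⟩
  -- ================ upper bound for induced ================
  have hHcol : (G.induce A).Colorable n := by
    refine ⟨Coloring.mk (fun x => fH h n hn3 g x) ?_⟩
    intro a b hab
    rw [comap_adj, Function.Embedding.coe_subtype, h.adj_iff] at hab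
    obtain ⟨hne, hcase⟩ := hab
    rcases hcase with ⟨ha, hb⟩ | ⟨i, j, hi, hj, hij⟩ | ⟨ha, hb⟩ | ⟨hb, ha⟩
    · show fH h n hn3 g a ≠ fH h n hn3 g b
      rw [fH_S h n hn3 g a ha, fH_S h n hn3 g b hb]
      intro e
      have h' := ginj e
      rw [Subtype.mk.injEq] at h'
      exact hne h'
    · obtain ⟨hi2, hi3, hi5⟩ := hidxA a i hi
      obtain ⟨hj2, hj3, hj5⟩ := hidxA b j hj
      show fH h n hn3 g a ≠ fH h n hn3 g b
      rw [show (a : V) = h.u i from hi, show (b : V) = h.u j from hj, fH_u, fH_u]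
      rcases hij with hij | hij <;>
        simp only [h1edges, List.mem_cons, List.mem_singleton, Prod.mk.injEq,
          List.not_mem_nil, or_false] at hij <;>
        rcases hij with ⟨rfl,rfl⟩|⟨rfl,rfl⟩|⟨rfl,rfl⟩|⟨rfl,rfl⟩|⟨rfl,rfl⟩|⟨rfl,rfl⟩ <;>
        first
          | (exact absurd rfl (by assumption))
          | (simp (config := { decide := true }) [cH, Fin.ext_iff])
    · rcases hb with e | e | e
      · exact absurd e b.2.1
      · exact absurd e b.2.2.1
      · exact absurd e b.2.2.2
    · rcases ha with e | e | e
      · exact absurd e a.2.1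
      · exact absurd e a.2.2.1
      · exact absurd e a.2.2.2
  -- ================ lower bound for induced ================
  have hHnot : ¬ (G.induce A).Colorable (n-1) := by
    rintro ⟨C⟩
    rcases Nat.lt_or_ge s 3 with hs2 | hs3
    · -- s = 2, n - 1 = 2 : triangle u0 u1 u4
      have hs2' : s = 2 := le_antisymm (by omega) h2
      have hn1 : n - 1 = 2 := by rw [hn, hs2']; rfl
      rw [hn1] at C
      have adj' : ∀ i j : Fin 6, (hi : i = 0 ∨ i = 1 ∨ i = 4) → (hj : j = 0 ∨ j = 1 ∨ j = 4) →
          ((i,j) ∈ h1edges ∨ (j,i) ∈ h1edges) →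
          C ⟨h.u i, huA i hi⟩ ≠ C ⟨h.u j, huA j hj⟩ := by
        intro i j hi hj hm
        refine C.valid ?_
        rw [comap_adj, Function.Embedding.coe_subtype]
        exact adjU i j hm
      have e01 := adj' 0 1 (by tauto) (by tauto) (Or.inl (by decide))
      have e04 := adj' 0 4 (by tauto) (by tauto) (Or.inl (by decide))
      have e14 := adj' 1 4 (by tauto) (by tauto) (Or.inl (by decide))
      exact key2 _ _ _ e01 e04 e14
    · -- s ≥ 3, n - 1 = s - 1 : the clique S
      have hn1 : n - 1 = s - 1 := by rw [hn, max_eq_left hs3]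
      have hinj : ∀ x (hx : x ∈ h.S) y (hy : y ∈ h.S),
          C ⟨x, hmemA x hx⟩ = C ⟨y, hmemA y hy⟩ → x = y := by
        intro x hx y hy e
        by_contra hne
        refine C.valid ?_ e
        rw [comap_adj, Function.Embedding.coe_subtype]
        exact adjS x hx y hy hne
      have hle : s ≤ n - 1 := by
        have := Finset.card_le_card_of_injOn
          (f := fun x : h.S => C ⟨x.1, hmemA x.1 x.2⟩) (s := h.S.attach) (t := Finset.univ)
          (fun _ _ => Finset.mem_univ _)
          (fun x _ y _ e => Subtype.ext (hinj x.1 x.2 y.1 y.2 e))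
        simpa using this
      omega
  -- ================ conclusion ================
  have hGchi : G.chromaticNumber = ((n+1 : ℕ) : ℕ∞) := chrom_eq hGcol hGnot
  have hHchi : (G.induce A).chromaticNumber = (n : ℕ∞) := chrom_eq hHcol hHnot
  refine ⟨fun hs3 => ?_, fun hs2 => ?_, ?_⟩
  · rw [hGchi, hn, max_eq_left hs3]
  · rw [hGchi, hn, hs2]
    norm_num
  · rw [hGchi, hHchi]
    push_cast
    ring
end

section
/- Every graph G in the class H₂ satisfies χ(G) = max{|S₁∪S₂|, |S₂∪S₃|, |S₃∪S₄|} + 1, and the subgraph G − {u,v,w} is 3K₁-free (its vertex set is the union of two cliques). -/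
open SimpleGraph

/-- The class `H₂`: the vertex set is partitioned into an independent set `{u, v, w}` and
four mutually disjoint cliques `S₁, S₂, S₃, S₄` with `S₁, S₂, S₄` nonempty; `S₂` is complete
to `S₁ ∪ S₃`, `S₃` is complete to `S₄`; `u` is complete to `S₁ ∪ S₄`, `v` to `S₁ ∪ S₂ ∪ S₃`,
`w` to `S₂ ∪ S₃ ∪ S₄`; and there are no other edges. -/
structure H2Data {V : Type*} [DecidableEq V] (G : SimpleGraph V) where
  u : V
  v : V
  w : V
  S1 : Finset V
  S2 : Finset V
  S3 : Finset V
  S4 : Finset V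
  huv : u ≠ v
  huw : u ≠ w
  hvw : v ≠ w
  notin : ∀ x : V, (x = u ∨ x = v ∨ x = w) → x ∉ S1 ∪ S2 ∪ S3 ∪ S4
  d12 : Disjoint S1 S2
  d13 : Disjoint S1 S3
  d14 : Disjoint S1 S4
  d23 : Disjoint S2 S3
  d24 : Disjoint S2 S4
  d34 : Disjoint S3 S4
  ne1 : S1.Nonempty
  ne2 : S2.Nonempty
  ne4 : S4.Nonempty
  cover : ∀ x : V, (x = u ∨ x = v ∨ x = w) ∨ x ∈ S1 ∪ S2 ∪ S3 ∪ S4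
  adj_iff : ∀ x y : V, G.Adj x y ↔ x ≠ y ∧
    ((x ∈ S1 ∧ y ∈ S1) ∨ (x ∈ S2 ∧ y ∈ S2) ∨ (x ∈ S3 ∧ y ∈ S3) ∨ (x ∈ S4 ∧ y ∈ S4) ∨
     (x ∈ S2 ∧ y ∈ S1 ∪ S3) ∨ (y ∈ S2 ∧ x ∈ S1 ∪ S3) ∨
     (x ∈ S3 ∧ y ∈ S4) ∨ (y ∈ S3 ∧ x ∈ S4) ∨
     (x = u ∧ y ∈ S1 ∪ S4) ∨ (y = u ∧ x ∈ S1 ∪ S4) ∨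
     (x = v ∧ y ∈ S1 ∪ S2 ∪ S3) ∨ (y = v ∧ x ∈ S1 ∪ S2 ∪ S3) ∨
     (x = w ∧ y ∈ S2 ∪ S3 ∪ S4) ∨ (y = w ∧ x ∈ S2 ∪ S3 ∪ S4))


noncomputable def fidx {V : Type*} [DecidableEq V] (S : Finset V) (x : V) : ℕ :=
  if h : x ∈ S then ((Fintype.equivFin S) ⟨x, h⟩ : Fin _).val else 0

lemma fidx_lt {V : Type*} [DecidableEq V] {S : Finset V} {x : V} (hx : x ∈ S) :
    fidx S x < S.card := by
  rw [fidx, dif_pos hx]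
  simpa using ((Fintype.equivFin S) ⟨x, hx⟩).isLt

lemma fidx_inj {V : Type*} [DecidableEq V] {S : Finset V} {x y : V} (hx : x ∈ S) (hy : y ∈ S)
    (h : fidx S x = fidx S y) : x = y := by
  simp only [fidx, dif_pos hx, dif_pos hy, Fin.val_eq_val, EmbeddingLike.apply_eq_iff_eq,
    Subtype.mk.injEq] at h
  exact h

/-- every `G ∈ H₂` satisfies
`χ(G) = max {|S₁∪S₂|, |S₂∪S₃|, |S₃∪S₄|} + 1`, and `G − {u, v, w}` is `3K₁`-free. -/
theorem stmt6 {V : Type*} [Fintype V] [DecidableEq V] {G : SimpleGraph V} (h : H2Data G) :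
    G.chromaticNumber =
      ((max ((h.S1 ∪ h.S2).card) (max ((h.S2 ∪ h.S3).card) ((h.S3 ∪ h.S4).card)) + 1 : ℕ) : ℕ∞) ∧
    ∀ x y z : V, x ∉ ({h.u, h.v, h.w} : Finset V) → y ∉ ({h.u, h.v, h.w} : Finset V) →
      z ∉ ({h.u, h.v, h.w} : Finset V) → x ≠ y → x ≠ z → y ≠ z →
      ¬ G.Adj x y → ¬ G.Adj x z → ¬ G.Adj y z → False := by
  constructor
  ·
    classical
    set M := max ((h.S1 ∪ h.S2).card) (max ((h.S2 ∪ h.S3).card) ((h.S3 ∪ h.S4).card)) with hMdef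
    have ha : (h.S1 ∪ h.S2).card = h.S1.card + h.S2.card := Finset.card_union_of_disjoint h.d12
    have hb : (h.S2 ∪ h.S3).card = h.S2.card + h.S3.card := Finset.card_union_of_disjoint h.d23
    have hc : (h.S3 ∪ h.S4).card = h.S3.card + h.S4.card := Finset.card_union_of_disjoint h.d34
    have haM : h.S1.card + h.S2.card ≤ M := by rw [hMdef]; omega
    have hbM : h.S2.card + h.S3.card ≤ M := by rw [hMdef]; omega
    have hcM : h.S3.card + h.S4.card ≤ M := by rw [hMdef]; omega
    set col : V → ℕ := fun x =>
      if x ∈ h.S2 then fidx h.S2 x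
      else if x ∈ h.S1 then h.S2.card + fidx h.S1 x
      else if x ∈ h.S3 then h.S2.card + fidx h.S3 x
      else if x ∈ h.S4 then
        (if fidx h.S4 x < h.S2.card then fidx h.S4 x else fidx h.S4 x + h.S3.card)
      else M with hcol
    have c2 : ∀ x ∈ h.S2, col x = fidx h.S2 x := by
      intro x hx; simp only [hcol]; rw [if_pos hx]
    have c1 : ∀ x ∈ h.S1, col x = h.S2.card + fidx h.S1 x := by
      intro x hx
      have h2 : x ∉ h.S2 := Finset.disjoint_left.mp h.d12 hx
      simp only [hcol]; rw [if_neg h2, if_pos hx]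
    have c3 : ∀ x ∈ h.S3, col x = h.S2.card + fidx h.S3 x := by
      intro x hx
      have h2 : x ∉ h.S2 := Finset.disjoint_right.mp h.d23 hx
      have h1 : x ∉ h.S1 := Finset.disjoint_right.mp h.d13 hx
      simp only [hcol]; rw [if_neg h2, if_neg h1, if_pos hx]
    have c4 : ∀ x ∈ h.S4, col x =
        (if fidx h.S4 x < h.S2.card then fidx h.S4 x else fidx h.S4 x + h.S3.card) := by
      intro x hx
      have h2 : x ∉ h.S2 := Finset.disjoint_right.mp h.d24 hx
      have h1 : x ∉ h.S1 := Finset.disjoint_right.mp h.d14 hx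
      have h3 : x ∉ h.S3 := Finset.disjoint_right.mp h.d34 hx
      simp only [hcol]; rw [if_neg h2, if_neg h1, if_neg h3, if_pos hx]
    have cT : ∀ x : V, (x = h.u ∨ x = h.v ∨ x = h.w) → col x = M := by
      intro x hx
      have hn := h.notin x hx
      simp only [Finset.mem_union, not_or] at hn
      simp only [hcol]; rw [if_neg hn.1.1.2, if_neg hn.1.1.1, if_neg hn.1.2, if_neg hn.2]
    have colS : ∀ x : V, x ∈ h.S1 ∪ h.S2 ∪ h.S3 ∪ h.S4 → col x < M := by
      intro x hx
      simp only [Finset.mem_union] at hx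
      rcases hx with ((hx | hx) | hx) | hx
      · rw [c1 x hx]; have := fidx_lt hx; omega
      · rw [c2 x hx]; have := fidx_lt hx; omega
      · rw [c3 x hx]; have := fidx_lt hx; omega
      · rw [c4 x hx]; have := fidx_lt hx; split_ifs <;> omega
    have col_le : ∀ x : V, col x ≤ M := by
      intro x
      rcases h.cover x with hx | hx
      · rw [cT x hx]
      · exact le_of_lt (colS x hx)
    have memBig : ∀ t : V, t ∈ h.S1 ∨ t ∈ h.S2 ∨ t ∈ h.S3 ∨ t ∈ h.S4 →
        t ∈ h.S1 ∪ h.S2 ∪ h.S3 ∪ h.S4 := by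
      intro t ht; simp only [Finset.mem_union]; tauto
    have valid : ∀ p q : V, G.Adj p q → col p ≠ col q := by
      intro p q hadj
      obtain ⟨hne, hcase⟩ := (h.adj_iff p q).1 hadj
      rcases hcase with ⟨h1, h2⟩ | ⟨h1, h2⟩ | ⟨h1, h2⟩ | ⟨h1, h2⟩ | ⟨h1, h2⟩ | ⟨h1, h2⟩ |
        ⟨h1, h2⟩ | ⟨h1, h2⟩ | ⟨h1, h2⟩ | ⟨h1, h2⟩ | ⟨h1, h2⟩ | ⟨h1, h2⟩ | ⟨h1, h2⟩ | ⟨h1, h2⟩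
      · rw [c1 p h1, c1 q h2]; intro e; exact hne (fidx_inj h1 h2 (by omega))
      · rw [c2 p h1, c2 q h2]; intro e; exact hne (fidx_inj h1 h2 e)
      · rw [c3 p h1, c3 q h2]; intro e; exact hne (fidx_inj h1 h2 (by omega))
      · rw [c4 p h1, c4 q h2]; intro e
        split_ifs at e <;> exact hne (fidx_inj h1 h2 (by omega))
      · rw [c2 p h1]; have := fidx_lt h1
        rw [Finset.mem_union] at h2
        rcases h2 with h2 | h2
        · rw [c1 q h2]; omega
        · rw [c3 q h2]; omega
      · rw [c2 q h1]; have := fidx_lt h1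
        rw [Finset.mem_union] at h2
        rcases h2 with h2 | h2
        · rw [c1 p h2]; omega
        · rw [c3 p h2]; omega
      · rw [c3 p h1, c4 q h2]
        have i3 := fidx_lt h1; have i4 := fidx_lt h2
        split_ifs <;> omega
      · rw [c3 q h1, c4 p h2]
        have i3 := fidx_lt h1; have i4 := fidx_lt h2
        split_ifs <;> omega
      · rw [cT p (Or.inl h1)]
        rw [Finset.mem_union] at h2
        have := colS q (memBig q (by tauto)); omega
      · rw [cT q (Or.inl h1)]
        rw [Finset.mem_union] at h2
        have := colS p (memBig p (by tauto)); omega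
      · rw [cT p (Or.inr (Or.inl h1))]
        simp only [Finset.mem_union] at h2
        have := colS q (memBig q (by tauto)); omega
      · rw [cT q (Or.inr (Or.inl h1))]
        simp only [Finset.mem_union] at h2
        have := colS p (memBig p (by tauto)); omega
      · rw [cT p (Or.inr (Or.inr h1))]
        simp only [Finset.mem_union] at h2
        have := colS q (memBig q (by tauto)); omega
      · rw [cT q (Or.inr (Or.inr h1))]
        simp only [Finset.mem_union] at h2
        have := colS p (memBig p (by tauto)); omega
    -- upper bound
    have up : G.chromaticNumber ≤ ((M + 1 : ℕ) : ℕ∞) := by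
      have hcolorable : G.Colorable (M + 1) := by
        refine ⟨SimpleGraph.Coloring.mk (fun x => ⟨col x, Nat.lt_succ_of_le (col_le x)⟩) ?_⟩
        intro p q hadj e
        exact valid p q hadj (by simpa using congrArg Fin.val e)
      exact hcolorable.chromaticNumber_le
    -- adjacency helpers for cliques
    have adjA : ∀ p q : V, p ≠ q → p ∈ h.S1 ∪ h.S2 → q ∈ h.S1 ∪ h.S2 → G.Adj p q := by
      intro p q hpq hp hq
      rw [h.adj_iff]
      refine ⟨hpq, ?_⟩
      rw [Finset.mem_union] at hp hq
      rcases hp with hp | hp <;> rcases hq with hq | hq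
      · exact Or.inl ⟨hp, hq⟩
      · exact Or.inr (Or.inr (Or.inr (Or.inr (Or.inr (Or.inl ⟨hq, Finset.mem_union_left _ hp⟩)))))
      · exact Or.inr (Or.inr (Or.inr (Or.inr (Or.inl ⟨hp, Finset.mem_union_left _ hq⟩))))
      · exact Or.inr (Or.inl ⟨hp, hq⟩)
    have adjB : ∀ p q : V, p ≠ q → p ∈ h.S3 ∪ h.S4 → q ∈ h.S3 ∪ h.S4 → G.Adj p q := by
      intro p q hpq hp hq
      rw [h.adj_iff]
      refine ⟨hpq, ?_⟩
      rw [Finset.mem_union] at hp hq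
      rcases hp with hp | hp <;> rcases hq with hq | hq
      · exact Or.inr (Or.inr (Or.inl ⟨hp, hq⟩))
      · exact Or.inr (Or.inr (Or.inr (Or.inr (Or.inr (Or.inr (Or.inl ⟨hp, hq⟩))))))
      · exact Or.inr (Or.inr (Or.inr (Or.inr (Or.inr (Or.inr (Or.inr (Or.inl ⟨hq, hp⟩)))))))
      · exact Or.inr (Or.inr (Or.inr (Or.inl ⟨hp, hq⟩)))
    have adjC : ∀ p q : V, p ≠ q → p ∈ h.S2 ∪ h.S3 → q ∈ h.S2 ∪ h.S3 → G.Adj p q := by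
      intro p q hpq hp hq
      rw [h.adj_iff]
      refine ⟨hpq, ?_⟩
      rw [Finset.mem_union] at hp hq
      rcases hp with hp | hp <;> rcases hq with hq | hq
      · exact Or.inr (Or.inl ⟨hp, hq⟩)
      · exact Or.inr (Or.inr (Or.inr (Or.inr (Or.inl ⟨hp, Finset.mem_union_right _ hq⟩))))
      · exact Or.inr (Or.inr (Or.inr (Or.inr (Or.inr (Or.inl ⟨hq, Finset.mem_union_right _ hp⟩)))))
      · exact Or.inr (Or.inr (Or.inl ⟨hp, hq⟩))
    have adjV : ∀ q : V, (q ∈ h.S1 ∨ q ∈ h.S2 ∨ q ∈ h.S3) → G.Adj h.v q := by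
      intro q hq
      have hne : h.v ≠ q := by
        intro e
        exact h.notin q (Or.inr (Or.inl e.symm)) (memBig q (by tauto))
      rw [h.adj_iff]
      refine ⟨hne, Or.inr (Or.inr (Or.inr (Or.inr (Or.inr (Or.inr (Or.inr (Or.inr (Or.inr
        (Or.inr (Or.inl ⟨rfl, ?_⟩))))))))))⟩
      simp only [Finset.mem_union]; tauto
    have adjW : ∀ q : V, (q ∈ h.S2 ∨ q ∈ h.S3 ∨ q ∈ h.S4) → G.Adj h.w q := by
      intro q hq
      have hne : h.w ≠ q := by
        intro e
        exact h.notin q (Or.inr (Or.inr e.symm)) (memBig q (by tauto))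
      rw [h.adj_iff]
      refine ⟨hne, Or.inr (Or.inr (Or.inr (Or.inr (Or.inr (Or.inr (Or.inr (Or.inr (Or.inr
        (Or.inr (Or.inr (Or.inr (Or.inl ⟨rfl, ?_⟩))))))))))))⟩
      simp only [Finset.mem_union]; tauto
    -- cliques
    have cliqueA : G.IsClique ↑(insert h.v (h.S1 ∪ h.S2)) := by
      rw [isClique_iff]
      intro p hp q hq hne
      simp only [Finset.coe_insert, Set.mem_insert_iff, Finset.mem_coe] at hp hq
      rcases hp with rfl | hp <;> rcases hq with rfl | hq
      · exact absurd rfl hne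
      · exact adjV q (by rw [Finset.mem_union] at hq; tauto)
      · exact (adjV p (by rw [Finset.mem_union] at hp; tauto)).symm
      · exact adjA p q hne hp hq
    have cliqueB : G.IsClique ↑(insert h.v (h.S2 ∪ h.S3)) := by
      rw [isClique_iff]
      intro p hp q hq hne
      simp only [Finset.coe_insert, Set.mem_insert_iff, Finset.mem_coe] at hp hq
      rcases hp with rfl | hp <;> rcases hq with rfl | hq
      · exact absurd rfl hne
      · exact adjV q (by rw [Finset.mem_union] at hq; tauto)
      · exact (adjV p (by rw [Finset.mem_union] at hp; tauto)).symm
      · exact adjC p q hne hp hq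
    have cliqueC : G.IsClique ↑(insert h.w (h.S3 ∪ h.S4)) := by
      rw [isClique_iff]
      intro p hp q hq hne
      simp only [Finset.coe_insert, Set.mem_insert_iff, Finset.mem_coe] at hp hq
      rcases hp with rfl | hp <;> rcases hq with rfl | hq
      · exact absurd rfl hne
      · exact adjW q (by rw [Finset.mem_union] at hq; tauto)
      · exact (adjW p (by rw [Finset.mem_union] at hp; tauto)).symm
      · exact adjB p q hne hp hq
    have vnotA : h.v ∉ h.S1 ∪ h.S2 := by
      have := h.notin h.v (Or.inr (Or.inl rfl))
      simp only [Finset.mem_union, not_or] at this ⊢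
      tauto
    have vnotB : h.v ∉ h.S2 ∪ h.S3 := by
      have := h.notin h.v (Or.inr (Or.inl rfl))
      simp only [Finset.mem_union, not_or] at this ⊢
      tauto
    have wnotC : h.w ∉ h.S3 ∪ h.S4 := by
      have := h.notin h.w (Or.inr (Or.inr rfl))
      simp only [Finset.mem_union, not_or] at this ⊢
      tauto
    have lower : ∃ T : Finset V, G.IsClique ↑T ∧ T.card = M + 1 := by
      have hM3 : M = (h.S1 ∪ h.S2).card ∨ M = (h.S2 ∪ h.S3).card ∨ M = (h.S3 ∪ h.S4).card := by
        rw [hMdef]; omega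
      rcases hM3 with hM1 | hM1 | hM1
      · refine ⟨insert h.v (h.S1 ∪ h.S2), cliqueA, ?_⟩
        rw [Finset.card_insert_of_notMem vnotA]; omega
      · refine ⟨insert h.v (h.S2 ∪ h.S3), cliqueB, ?_⟩
        rw [Finset.card_insert_of_notMem vnotB]; omega
      · refine ⟨insert h.w (h.S3 ∪ h.S4), cliqueC, ?_⟩
        rw [Finset.card_insert_of_notMem wnotC]; omega
    have low : ((M + 1 : ℕ) : ℕ∞) ≤ G.chromaticNumber := by
      obtain ⟨T, hT, hTcard⟩ := lower
      have := hT.card_le_chromaticNumber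
      rwa [hTcard] at this
    exact le_antisymm up low
  ·
    intro x y z hx hy hz hxy hxz hyz nxy nxz nyz
    have mem : ∀ t : V, t ∉ ({h.u, h.v, h.w} : Finset V) →
        (t ∈ h.S1 ∪ h.S2) ∨ (t ∈ h.S3 ∪ h.S4) := by
      intro t ht
      rcases h.cover t with h' | h'
      · exact absurd (by simp only [Finset.mem_insert, Finset.mem_singleton]; tauto) ht
      · simp only [Finset.mem_union] at h' ⊢; tauto
    have adjA : ∀ a b : V, a ≠ b → a ∈ h.S1 ∪ h.S2 → b ∈ h.S1 ∪ h.S2 → G.Adj a b := by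
      intro a b hab ha hb
      rw [h.adj_iff]
      refine ⟨hab, ?_⟩
      rw [Finset.mem_union] at ha hb
      rcases ha with ha | ha <;> rcases hb with hb | hb
      · exact Or.inl ⟨ha, hb⟩
      · exact Or.inr (Or.inr (Or.inr (Or.inr (Or.inr (Or.inl ⟨hb, Finset.mem_union_left _ ha⟩)))))
      · exact Or.inr (Or.inr (Or.inr (Or.inr (Or.inl ⟨ha, Finset.mem_union_left _ hb⟩))))
      · exact Or.inr (Or.inl ⟨ha, hb⟩)
    have adjB : ∀ a b : V, a ≠ b → a ∈ h.S3 ∪ h.S4 → b ∈ h.S3 ∪ h.S4 → G.Adj a b := by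
      intro a b hab ha hb
      rw [h.adj_iff]
      refine ⟨hab, ?_⟩
      rw [Finset.mem_union] at ha hb
      rcases ha with ha | ha <;> rcases hb with hb | hb
      · exact Or.inr (Or.inr (Or.inl ⟨ha, hb⟩))
      · exact Or.inr (Or.inr (Or.inr (Or.inr (Or.inr (Or.inr (Or.inl ⟨ha, hb⟩))))))
      · exact Or.inr (Or.inr (Or.inr (Or.inr (Or.inr (Or.inr (Or.inr (Or.inl ⟨hb, ha⟩)))))))
      · exact Or.inr (Or.inr (Or.inr (Or.inl ⟨ha, hb⟩)))
    rcases mem x hx with hx' | hx' <;> rcases mem y hy with hy' | hy' <;>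
      rcases mem z hz with hz' | hz'
    · exact nxy (adjA x y hxy hx' hy')
    · exact nxy (adjA x y hxy hx' hy')
    · exact nxz (adjA x z hxz hx' hz')
    · exact nyz (adjB y z hyz hy' hz')
    · exact nyz (adjA y z hyz hy' hz')
    · exact nxz (adjB x z hxz hx' hz')
    · exact nxy (adjB x y hxy hx' hy')
    · exact nxy (adjB x y hxy hx' hy')
end

section
/- Let G be a graph, ψ a χ(G)-coloring of G, and ℓ > χ(G). Suppose every ℓ-coloring φ of G can be recolored (by single-vertex recoloring steps through proper ℓ-colorings) to a χ(G)-coloring inducing the same color classes as ψ, recoloring each vertex at most p times. Then R_ℓ(G) is connected with diameter at most (2p+2)·n, where n = |V(G)|. -/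
open SimpleGraph

set_option linter.unusedSectionVars false

section Lemmas
variable {V : Type*} {G : SimpleGraph V} {ℓ : ℕ}

/-- Concatenation of recolor sequences. -/
lemma recolorSeq_trans {m₁ m₂ : ℕ} {c₁ c₂ : ℕ → V → Fin ℓ}
    (h₁ : IsRecolorSeq G ℓ m₁ c₁) (h₂ : IsRecolorSeq G ℓ m₂ c₂) (hj : c₁ m₁ = c₂ 0) :
    ∃ c, IsRecolorSeq G ℓ (m₁ + m₂) c ∧ c 0 = c₁ 0 ∧ c (m₁ + m₂) = c₂ m₂ := by
  refine ⟨fun j => if j < m₁ then c₁ j else c₂ (j - m₁), ⟨?_, ?_⟩, ?_, ?_⟩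
  · intro i hi
    by_cases h : i < m₁
    · simpa [h] using h₁.1 i h.le
    · simpa [h] using h₂.1 (i - m₁) (by omega)
  · intro i hi a b hab hne
    have key : ∀ j ≤ m₁ + m₂, (if j < m₁ then c₁ j else c₂ (j - m₁)) =
        if j ≤ m₁ then c₁ j else c₂ (j - m₁) := by
      intro j hj'
      by_cases h : j < m₁
      · simp [h, h.le]
      · by_cases h' : j = m₁
        · simp [h', hj]
        · simp [h, show ¬ j ≤ m₁ by omega]
    simp only [show ∀ j, (fun j => if j < m₁ then c₁ j else c₂ (j - m₁)) j =
        if j < m₁ then c₁ j else c₂ (j - m₁) from fun _ => rfl] at hne ⊢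
    rw [key i (by omega), key (i+1) (by omega)] at hne ⊢
    by_cases h : i < m₁
    · rw [if_pos h.le, if_pos (show i + 1 ≤ m₁ from h)] at hne ⊢
      exact h₁.2 i h a b hab hne
    · have e1 : ¬ i ≤ m₁ ∨ i = m₁ := by omega
      have hi1 : ¬ i + 1 ≤ m₁ := by omega
      rcases e1 with h' | h'
      · rw [if_neg h', if_neg hi1] at hne ⊢
        have : i - m₁ + 1 = i + 1 - m₁ := by omega
        rw [← this] at hne ⊢
        exact h₂.2 (i - m₁) (by omega) a b hab hne
      · rw [h'] at hne ⊢
        rw [if_pos le_rfl, if_neg (show ¬ m₁ + 1 ≤ m₁ by omega), hj] at hne ⊢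
        have : (0:ℕ) + 1 = m₁ + 1 - m₁ := by omega
        rw [← this] at hne ⊢
        exact h₂.2 0 (by omega) a b hab hne
  · by_cases h : 0 < m₁
    · simp [h]
    · have h0 : m₁ = 0 := by omega
      subst h0
      simpa using hj.symm
  · have h' : ¬ (m₁ + m₂ < m₁) := by omega
    simp [h']

/-- Reversal of a recolor sequence. -/
lemma recolorSeq_symm {m : ℕ} {c : ℕ → V → Fin ℓ} (h : IsRecolorSeq G ℓ m c) :
    ∃ c', IsRecolorSeq G ℓ m c' ∧ c' 0 = c m ∧ c' m = c 0 := by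
  refine ⟨fun j => c (m - j), ⟨?_, ?_⟩, by simp, by simp⟩
  · intro i hi; exact h.1 (m - i) (by omega)
  · intro i hi a b hab hne
    simp only [show ∀ j, (fun j => c (m - j)) j = c (m - j) from fun _ => rfl] at hne ⊢
    have e : m - i = (m - (i+1)) + 1 := by omega
    rw [e] at hne ⊢
    exact (h.2 (m - (i+1)) (by omega) a b hab (fun hh => hne hh.symm)).symm

lemma recolorCount_succ {m : ℕ} (c : ℕ → V → Fin ℓ) (a : V) :
    recolorCount (m+1) c a =
      recolorCount m c a + (if c m a ≠ c (m+1) a then 1 else 0) := by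
  classical
  unfold recolorCount
  rw [Finset.range_add_one, Finset.filter_insert]
  by_cases h : c m a ≠ c (m+1) a
  · rw [if_pos h, if_pos h, Finset.card_insert_of_notMem (by simp)]
  · rw [if_neg h, if_neg h, add_zero]

/-- Compression: remove idle steps; the length is bounded by total recolorings. -/
lemma recolorSeq_compress [Fintype V] :
    ∀ (m : ℕ) (c : ℕ → V → Fin ℓ), IsRecolorSeq G ℓ m c →
    ∃ m' c', IsRecolorSeq G ℓ m' c' ∧ c' 0 = c 0 ∧ c' m' = c m ∧
      m' ≤ ∑ a : V, recolorCount m c a := by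
  classical
  intro m
  induction m with
  | zero => intro c hc; exact ⟨0, c, ⟨fun i hi => by simpa [Nat.le_zero.mp hi] using hc.1 0 le_rfl,
      fun i hi => by omega⟩, rfl, rfl, by simp⟩
  | succ m ih =>
    intro c hc
    have hc' : IsRecolorSeq G ℓ m c :=
      ⟨fun i hi => hc.1 i (by omega), fun i hi => hc.2 i (by omega)⟩
    obtain ⟨m', c', hseq, h0, hm, hle⟩ := ih c hc'
    have hmono : ∀ a : V, recolorCount m c a ≤ recolorCount (m+1) c a := by
      intro a; rw [recolorCount_succ]; omega
    by_cases hidle : c m = c (m+1)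
    · exact ⟨m', c', hseq, h0, hm.trans hidle,
        hle.trans (Finset.sum_le_sum fun a _ => hmono a)⟩
    · have ⟨a₀, ha₀⟩ : ∃ a, c m a ≠ c (m+1) a := by
        by_contra hcon; push_neg at hcon; exact hidle (funext hcon)
      refine ⟨m' + 1, fun j => if j ≤ m' then c' j else c (m+1), ⟨?_, ?_⟩, ?_, ?_, ?_⟩
      · intro i hi
        by_cases h : i ≤ m'
        · simpa [h] using hseq.1 i h
        · simpa [h] using hc.1 (m+1) le_rfl
      · intro i hi a b hab hne
        simp only [show ∀ j, (fun j => if j ≤ m' then c' j else c (m+1)) j =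
            if j ≤ m' then c' j else c (m+1) from fun _ => rfl] at hne ⊢
        by_cases h : i < m'
        · rw [if_pos h.le, if_pos (by omega : i + 1 ≤ m')] at hne ⊢
          exact hseq.2 i h a b hab hne
        · have hie : i = m' := by omega
          subst hie
          rw [if_pos le_rfl, if_neg (by omega), hm] at hne ⊢
          exact hc.2 m (by omega) a b hab hne
      · simp [h0]
      · simp
      · calc m' + 1 ≤ (∑ a : V, recolorCount m c a) + 1 := by omega
          _ ≤ ∑ a : V, recolorCount (m+1) c a := by
              have : ∀ a : V, recolorCount m c a + (if a = a₀ then 1 else 0) ≤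
                  recolorCount (m+1) c a := by
                intro a
                rw [recolorCount_succ]
                by_cases h : a = a₀ <;> simp [h, ha₀]
              calc (∑ a : V, recolorCount m c a) + 1
                  = ∑ a : V, (recolorCount m c a + if a = a₀ then 1 else 0) := by
                    rw [Finset.sum_add_distrib, Finset.sum_ite_eq' Finset.univ a₀ (fun _ => 1)]
                    simp
                _ ≤ _ := Finset.sum_le_sum fun a _ => this a

end Lemmas

section Route
variable {α β : Type*} [DecidableEq α] [DecidableEq β]

/-- Apply a list of moves (index, new value) to a function. -/
def applyMoves (f : α → β) : List (α × β) → (α → β)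
  | [] => f
  | (i, t) :: L => applyMoves (Function.update f i t) L

/-- Validity of a move list relative to an active set `S` and color set `C`. -/
def ValidFrom (S : Finset α) (C : Finset β) : (α → β) → List (α × β) → Prop
  | _, [] => True
  | f, (i, t) :: L => i ∈ S ∧ t ∈ C ∧ f i ≠ t ∧ (∀ j ∈ S, j ≠ i → f j ≠ t) ∧
      ValidFrom S C (Function.update f i t) L

lemma applyMoves_const (f : α → β) (i : α) :
    ∀ L : List (α × β), (∀ p ∈ L, p.1 ≠ i) → applyMoves f L i = f i
  | [], _ => rfl
  | (j, t) :: L, h => by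
    have hj : j ≠ i := h (j, t) List.mem_cons_self
    rw [applyMoves, applyMoves_const _ i L (fun p hp => h p (List.mem_cons_of_mem _ hp)),
      Function.update_of_ne (Ne.symm hj)]

lemma validFrom_movers (S : Finset α) (C : Finset β) :
    ∀ (L : List (α × β)) (f : α → β), ValidFrom S C f L → ∀ p ∈ L, p.1 ∈ S
  | [], _, _, p, hp => absurd hp List.not_mem_nil
  | (j, t) :: L, f, h, p, hp => by
    rcases List.mem_cons.mp hp with h' | h'
    · rw [h']; exact h.1
    · exact validFrom_movers S C L _ h.2.2.2.2 p h'

/-- Enlarging the active set and color set preserves validity, provided the new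
index `i` keeps a value `v` excluded from the smaller color set. -/
lemma validFrom_mono (S : Finset α) (C : Finset β) (i : α) (v : β) (hv : v ∈ C) :
    ∀ (L : List (α × β)) (f : α → β), f i = v →
      ValidFrom (S.erase i) (C.erase v) f L → ValidFrom S C f L
  | [], _, _, _ => trivial
  | (j, t) :: L, f, hf, h => by
    obtain ⟨hjS, htC, hft, hall, hrest⟩ := h
    have hji : j ≠ i := (Finset.mem_erase.mp hjS).1
    refine ⟨Finset.mem_of_mem_erase hjS, Finset.mem_of_mem_erase htC, hft, ?_, ?_⟩
    · intro a haS hai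
      by_cases hia : a = i
      · rw [hia, hf]; exact fun he => (Finset.mem_erase.mp htC).1 he.symm
      · exact hall a (Finset.mem_erase.mpr ⟨hia, haS⟩) hai
    · exact validFrom_mono S C i v hv L _ (by rw [Function.update_of_ne (Ne.symm hji), hf]) hrest

/-- The routing lemma: any two injections of `S` into `C` (with `|S| < |C|`) are
connected by a valid move list touching each index at most twice. -/
lemma route_aux [Fintype α] : ∀ (n : ℕ) (S : Finset α) (C : Finset β) (F G : α → β),
    S.card * (Fintype.card α + 1) + (S.filter fun i => F i ∈ S.image G).card ≤ n →
    Set.InjOn F S → Set.InjOn G S →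
    (∀ i ∈ S, F i ∈ C) → (∀ i ∈ S, G i ∈ C) → S.card < C.card →
    ∃ L : List (α × β), ValidFrom S C F L ∧ (∀ i ∈ S, applyMoves F L i = G i) ∧
      (∀ i, (L.map Prod.fst).count i ≤ 2) ∧
      (∀ i ∈ S, F i ∉ S.image G → (L.map Prod.fst).count i ≤ 1) := by
  intro n
  induction n with
  | zero =>
    intro S C F G hM _ _ _ _ _
    have h1 : S.card * (Fintype.card α + 1) = 0 := by omega
    have hS : S = ∅ := by
      rcases Nat.mul_eq_zero.mp h1 with h | h
      · exact Finset.card_eq_zero.mp h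
      · omega
    subst hS
    exact ⟨[], trivial, fun i hi => absurd hi (Finset.notMem_empty i), fun i => by simp,
      fun i hi => absurd hi (Finset.notMem_empty i)⟩
  | succ n ih =>
    intro S C F G hM hF hG hFC hGC hcard
    rcases Finset.eq_empty_or_nonempty S with hS | hS
    · subst hS
      exact ⟨[], trivial, fun i hi => absurd hi (Finset.notMem_empty i), fun i => by simp,
        fun i hi => absurd hi (Finset.notMem_empty i)⟩
    by_cases hcase1 : ∃ i ∈ S, ∀ j ∈ S, j ≠ i → F j ≠ G i
    · obtain ⟨i, hiS, hfree⟩ := hcase1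
      -- common facts for the recursive call on `S.erase i`, `C.erase (G i)`
      have hScard : S.card ≤ Fintype.card α := Finset.card_le_univ S
      have hcard' : (S.erase i).card < (C.erase (G i)).card := by
        rw [Finset.card_erase_of_mem hiS, Finset.card_erase_of_mem (hGC i hiS)]
        have := Finset.card_pos.mpr hS
        omega
      have hGC' : ∀ j ∈ S.erase i, G j ∈ C.erase (G i) := by
        intro j hj
        obtain ⟨hji, hjS⟩ := Finset.mem_erase.mp hj
        exact Finset.mem_erase.mpr ⟨fun he => hji (hG hjS hiS he), hGC j hjS⟩
      have hG' : Set.InjOn G (S.erase i) := hG.mono (by simp [Finset.coe_subset])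
      have hMnew : ∀ F' : α → β, (S.erase i).card * (Fintype.card α + 1) +
          ((S.erase i).filter fun j => F' j ∈ (S.erase i).image G).card ≤ n := by
        intro F'
        have h1 : (S.erase i).card = S.card - 1 := Finset.card_erase_of_mem hiS
        have h2 : ((S.erase i).filter fun j => F' j ∈ (S.erase i).image G).card ≤ S.card - 1 := by
          rw [← h1]; exact (Finset.card_filter_le _ _)
        have h3 : 1 ≤ S.card := Finset.card_pos.mpr hS
        have h4 : S.card - 1 ≤ Fintype.card α := by omega
        have h5 : S.card * (Fintype.card α + 1) ≤ n + 1 := by omega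
        calc (S.erase i).card * (Fintype.card α + 1) +
              ((S.erase i).filter fun j => F' j ∈ (S.erase i).image G).card
            ≤ (S.card - 1) * (Fintype.card α + 1) + (S.card - 1) := by
              rw [h1]; omega
          _ ≤ n := by
              have : (S.card - 1) * (Fintype.card α + 1) + (Fintype.card α + 1) =
                  S.card * (Fintype.card α + 1) := by
                have : S.card - 1 + 1 = S.card := by omega
                nth_rewrite 2 [← this]
                ring
              omega
      by_cases heq : F i = G i
      · -- no move needed for i
        have hFC' : ∀ j ∈ S.erase i, F j ∈ C.erase (G i) := by
          intro j hj
          obtain ⟨hji, hjS⟩ := Finset.mem_erase.mp hj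
          exact Finset.mem_erase.mpr ⟨hfree j hjS hji, hFC j hjS⟩
        obtain ⟨L, hvalid, hagree, hcount, hcount1⟩ :=
          ih (S.erase i) (C.erase (G i)) F G (hMnew F)
            (hF.mono (by simp [Finset.coe_subset])) hG' hFC' hGC' hcard'
        have hmovers : ∀ p ∈ L, p.1 ≠ i := fun p hp =>
          (Finset.mem_erase.mp (validFrom_movers _ _ L F hvalid p hp)).1
        refine ⟨L, validFrom_mono S C i (G i) (hGC i hiS) L F heq hvalid, ?_, hcount, ?_⟩
        · intro j hjS
          by_cases hji : j = i
          · rw [hji, applyMoves_const F i L hmovers, heq]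
          · exact hagree j (Finset.mem_erase.mpr ⟨hji, hjS⟩)
        · intro j hjS hnot
          by_cases hji : j = i
          · rw [hji]
            have : (L.map Prod.fst).count i = 0 := by
              rw [List.count_eq_zero]
              intro hmem
              obtain ⟨p, hp, hpe⟩ := List.mem_map.mp hmem
              exact hmovers p hp hpe
            omega
          · refine hcount1 j (Finset.mem_erase.mpr ⟨hji, hjS⟩) ?_
            intro hmem
            exact hnot (Finset.image_subset_image (Finset.erase_subset i S) hmem)
      · -- move i to G i first
        set F' := Function.update F i (G i) with hF'def
        have hF'eq : ∀ j, j ≠ i → F' j = F j := fun j hj => Function.update_of_ne hj _ _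
        have hF' : Set.InjOn F' (S.erase i) := by
          intro a ha b hb hab
          rw [Finset.coe_erase] at ha hb
          rw [hF'eq a ha.2, hF'eq b hb.2] at hab
          exact hF ha.1 hb.1 hab
        have hFC' : ∀ j ∈ S.erase i, F' j ∈ C.erase (G i) := by
          intro j hj
          obtain ⟨hji, hjS⟩ := Finset.mem_erase.mp hj
          rw [hF'eq j hji]
          exact Finset.mem_erase.mpr ⟨hfree j hjS hji, hFC j hjS⟩
        obtain ⟨L, hvalid, hagree, hcount, hcount1⟩ :=
          ih (S.erase i) (C.erase (G i)) F' G (hMnew F') hF' hG' hFC' hGC' hcard'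
        have hmovers : ∀ p ∈ L, p.1 ≠ i := fun p hp =>
          (Finset.mem_erase.mp (validFrom_movers _ _ L F' hvalid p hp)).1
        have hcnt0 : (L.map Prod.fst).count i = 0 := by
          rw [List.count_eq_zero]
          intro hmem
          obtain ⟨p, hp, hpe⟩ := List.mem_map.mp hmem
          exact hmovers p hp hpe
        refine ⟨(i, G i) :: L, ⟨hiS, hGC i hiS, heq, hfree, ?_⟩, ?_, ?_, ?_⟩
        · exact validFrom_mono S C i (G i) (hGC i hiS) L F'
            (by rw [hF'def, Function.update_self]) hvalid
        · intro j hjS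
          rw [applyMoves]
          by_cases hji : j = i
          · rw [hji, applyMoves_const F' i L hmovers, hF'def, Function.update_self]
          · exact hagree j (Finset.mem_erase.mpr ⟨hji, hjS⟩)
        · intro j
          by_cases hji : j = i
          · rw [hji]; simp [hcnt0]
          · rw [List.map_cons, List.count_cons_of_ne (Ne.symm hji)]
            exact hcount j
        · intro j hjS hnot
          by_cases hji : j = i
          · rw [hji]; simp [hcnt0]
          · rw [List.map_cons, List.count_cons_of_ne (Ne.symm hji)]
            refine hcount1 j (Finset.mem_erase.mpr ⟨hji, hjS⟩) ?_
            rw [hF'eq j hji]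
            intro hmem
            exact hnot (Finset.image_subset_image (Finset.erase_subset i S) hmem)
    · -- blocked case
      push_neg at hcase1
      have hFG : S.image G = S.image F := by
        apply Finset.eq_of_subset_of_card_le
        · intro x hx
          obtain ⟨i, hiS, hix⟩ := Finset.mem_image.mp hx
          obtain ⟨j, hjS, hji, hFj⟩ := hcase1 i hiS
          exact Finset.mem_image.mpr ⟨j, hjS, by rw [hFj, hix]⟩
        · rw [Finset.card_image_of_injOn hF, Finset.card_image_of_injOn hG]
      obtain ⟨t, ht⟩ : (C \ S.image F).Nonempty := by
        apply Finset.card_pos.mp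
        have h1 : (S.image F).card = S.card := Finset.card_image_of_injOn hF
        have h2 : S.image F ⊆ C := Finset.image_subset_iff.mpr hFC
        rw [Finset.card_sdiff_of_subset h2]
        omega
      obtain ⟨htC, htF⟩ := Finset.mem_sdiff.mp ht
      obtain ⟨s₀, hs₀⟩ := hS
      set F' := Function.update F s₀ t with hF'def
      have hF's : F' s₀ = t := Function.update_self _ _ _
      have hF'eq : ∀ j, j ≠ s₀ → F' j = F j := fun j hj => Function.update_of_ne hj _ _
      have hFne : ∀ j ∈ S, j ≠ s₀ → F j ≠ t := by
        intro j hjS _ he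
        exact htF (Finset.mem_image.mpr ⟨j, hjS, he⟩)
      have hFs₀ne : F s₀ ≠ t := fun he => htF (Finset.mem_image.mpr ⟨s₀, hs₀, he⟩)
      have hF'inj : Set.InjOn F' S := by
        intro a ha b hb hab
        by_cases h1 : a = s₀ <;> by_cases h2 : b = s₀
        · rw [h1, h2]
        · rw [h1, hF's, hF'eq b h2] at hab
          exact absurd hab.symm (hFne b hb h2)
        · rw [h2, hF's, hF'eq a h1] at hab
          exact absurd hab (hFne a ha h1)
        · rw [hF'eq a h1, hF'eq b h2] at hab
          exact hF ha hb hab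
      have hF'C : ∀ j ∈ S, F' j ∈ C := by
        intro j hj
        by_cases h : j = s₀
        · rw [h, hF's]; exact htC
        · rw [hF'eq j h]; exact hFC j hj
      have hMnew : S.card * (Fintype.card α + 1) +
          (S.filter fun j => F' j ∈ S.image G).card ≤ n := by
        have hfull : (S.filter fun j => F j ∈ S.image G) = S := by
          apply Finset.filter_true_of_mem
          intro j hj
          rw [hFG]
          exact Finset.mem_image.mpr ⟨j, hj, rfl⟩
        have hsub : (S.filter fun j => F' j ∈ S.image G) ⊆ S.erase s₀ := by
          intro j hj
          obtain ⟨hjS, hjmem⟩ := Finset.mem_filter.mp hj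
          refine Finset.mem_erase.mpr ⟨?_, hjS⟩
          intro he
          rw [he, hF's, hFG] at hjmem
          exact htF hjmem
        have h1 : (S.filter fun j => F' j ∈ S.image G).card ≤ S.card - 1 := by
          calc _ ≤ (S.erase s₀).card := Finset.card_le_card hsub
            _ = S.card - 1 := Finset.card_erase_of_mem hs₀
        have h2 : (S.filter fun j => F j ∈ S.image G).card = S.card := by rw [hfull]
        have h3 : 1 ≤ S.card := Finset.card_pos.mpr ⟨s₀, hs₀⟩
        omega
      obtain ⟨L, hvalid, hagree, hcount, hcount1⟩ :=
        ih S C F' G hMnew hF'inj hG hF'C hGC hcard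
      refine ⟨(s₀, t) :: L, ⟨hs₀, htC, hFs₀ne, fun j hj hji => hFne j hj hji, hvalid⟩,
        ?_, ?_, ?_⟩
      · intro j hjS
        rw [applyMoves]
        exact hagree j hjS
      · intro j
        by_cases hji : j = s₀
        · have hs₀1 : (L.map Prod.fst).count s₀ ≤ 1 := by
            apply hcount1 s₀ hs₀
            rw [hF's, hFG]
            exact htF
          rw [hji, List.map_cons, List.count_cons_self]
          omega
        · rw [List.map_cons, List.count_cons_of_ne (Ne.symm hji)]
          exact hcount j
      · intro j hjS hnot
        exfalso
        apply hnot
        rw [hFG]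
        exact Finset.mem_image.mpr ⟨j, hjS, rfl⟩

end Route

section ClassMove
variable {V : Type*} {G : SimpleGraph V} {ℓ : ℕ} [DecidableEq V]

/-- Recolor a subset `A` of an independent set `B` to a fresh color `t`,
one vertex at a time. -/
lemma classMove (σ : V → Fin ℓ) (hσ : IsProperColoring G ℓ σ)
    (B : Finset V) (hB : ∀ a ∈ B, ∀ b ∈ B, ¬ G.Adj a b)
    (t : Fin ℓ) (ht : ∀ v, σ v ≠ t) :
    ∀ A : Finset V, A ⊆ B →
    ∃ c, IsRecolorSeq G ℓ A.card c ∧ c 0 = σ ∧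
      c A.card = fun v => if v ∈ A then t else σ v := by
  have hproper : ∀ A : Finset V, A ⊆ B →
      IsProperColoring G ℓ (fun v => if v ∈ A then t else σ v) := by
    intro A hAB a b hadj
    by_cases ha : a ∈ A <;> by_cases hb : b ∈ A <;> simp only [ha, hb, if_pos, if_neg,
      if_true, if_false]
    · exact absurd hadj (hB a (hAB ha) b (hAB hb))
    · exact fun he => ht b he.symm
    · exact ht a
    · exact hσ hadj
  intro A
  induction A using Finset.induction_on with
  | empty =>
    intro _
    exact ⟨fun _ => σ, ⟨fun i hi => hσ, fun i hi => by simp at hi⟩, rfl, by funext v; simp⟩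
  | @insert a A ha ih =>
    intro hAB
    have hAB' : A ⊆ B := (Finset.subset_insert a A).trans hAB
    obtain ⟨c, hseq, h0, hend⟩ := ih hAB'
    rw [Finset.card_insert_of_notMem ha]
    set σI : V → Fin ℓ := fun v => if v ∈ insert a A then t else σ v with hσI
    refine ⟨fun j => if j ≤ A.card then c j else σI, ⟨?_, ?_⟩, ?_, ?_⟩
    · intro i hi
      by_cases h : i ≤ A.card
      · simpa [h] using hseq.1 i h
      · show IsProperColoring G ℓ (if i ≤ A.card then c i else σI)
        rw [if_neg h]
        exact hproper (insert a A) hAB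
    · intro i hi a' b' hab hne
      simp only [show ∀ j, (fun j => if j ≤ A.card then c j else σI) j =
          if j ≤ A.card then c j else σI from fun _ => rfl] at hne ⊢
      by_cases h : i < A.card
      · rw [if_pos h.le, if_pos (show i + 1 ≤ A.card from h)] at hne ⊢
        exact hseq.2 i h a' b' hab hne
      · have hie : i = A.card := by omega
        rw [hie, if_pos le_rfl, if_neg (by omega), hend] at hne ⊢
        -- the step from `fun v => if v ∈ A ...` to σI changes only `a`
        by_cases hb' : b' = a
        · exfalso
          apply hne
          have ha' : a' ≠ a := by rw [← hb'] at *; exact hab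
          simp only [hσI, Finset.mem_insert]
          by_cases h' : a' ∈ A <;> simp [h', ha']
        · simp only [hσI, Finset.mem_insert]
          by_cases h' : b' ∈ A <;> simp [h', hb']
    · simp [h0]
    · simp
end ClassMove

section Exec
variable {V : Type*} [Fintype V] [DecidableEq V] {G : SimpleGraph V} {ℓ k : ℕ}

/-- Execute a valid move list as a recolor sequence, class by class. -/
lemma exec (ψ : V → Fin k) (hψ : IsProperColoring G k ψ) :
    ∀ (L : List (Fin k × Fin ℓ)) (f : Fin k → Fin ℓ),
    ValidFrom (Finset.univ.image ψ) Finset.univ f L →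
    Set.InjOn f (Finset.univ.image ψ) →
    ∃ c, IsRecolorSeq G ℓ
        ((L.map fun q => (Finset.univ.filter fun v => ψ v = q.1).card).sum) c ∧
      c 0 = f ∘ ψ ∧
      c ((L.map fun q => (Finset.univ.filter fun v => ψ v = q.1).card).sum) =
        applyMoves f L ∘ ψ := by
  have hproper : ∀ f : Fin k → Fin ℓ, Set.InjOn f (Finset.univ.image ψ) →
      IsProperColoring G ℓ (f ∘ ψ) := by
    intro f hf a b hadj he
    exact hψ hadj (hf (by simp [Finset.mem_image]) (by simp [Finset.mem_image]) he)
  intro L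
  induction L with
  | nil =>
    intro f hvalid hinj
    exact ⟨fun _ => f ∘ ψ, ⟨fun i hi => hproper f hinj, fun i hi => by simp at hi⟩,
      rfl, by simp [applyMoves]⟩
  | cons q L ih =>
    obtain ⟨i, t⟩ := q
    intro f hvalid hinj
    obtain ⟨hiS, -, hfit, hall, hrest⟩ := hvalid
    set B : Finset V := Finset.univ.filter fun v => ψ v = i with hBdef
    have hBmem : ∀ v, v ∈ B ↔ ψ v = i := by intro v; simp [hBdef]
    have hBind : ∀ a ∈ B, ∀ b ∈ B, ¬ G.Adj a b := by
      intro a ha b hb hadj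
      exact hψ hadj (((hBmem a).mp ha).trans ((hBmem b).mp hb).symm)
    have hfresh : ∀ v, (f ∘ ψ) v ≠ t := by
      intro v
      by_cases h : ψ v = i
      · show f (ψ v) ≠ t; rw [h]; exact hfit
      · exact hall (ψ v) (by simp [Finset.mem_image]) h
    obtain ⟨c₁, hc₁, hc₁0, hc₁end⟩ :=
      classMove (G := G) (f ∘ ψ) (hproper f hinj) B hBind t hfresh B le_rfl
    have hupd : ∀ v, (if v ∈ B then t else (f ∘ ψ) v) = (Function.update f i t ∘ ψ) v := by
      intro v
      by_cases h : ψ v = i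
      · rw [if_pos ((hBmem v).mpr h)]
        show t = Function.update f i t (ψ v)
        rw [h, Function.update_self]
      · rw [if_neg (fun hm => h ((hBmem v).mp hm))]
        show f (ψ v) = Function.update f i t (ψ v)
        rw [Function.update_of_ne h]
    have hc₁end' : c₁ B.card = Function.update f i t ∘ ψ := by
      rw [hc₁end]; funext v; exact hupd v
    have hinj' : Set.InjOn (Function.update f i t) (Finset.univ.image ψ) := by
      intro a ha b hb hab
      by_cases h1 : a = i <;> by_cases h2 : b = i
      · rw [h1, h2]
      · rw [h1, Function.update_self, Function.update_of_ne h2] at hab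
        exact absurd hab.symm (hall b hb h2)
      · rw [h2, Function.update_self, Function.update_of_ne h1] at hab
        exact absurd hab (hall a ha h1)
      · rw [Function.update_of_ne h1, Function.update_of_ne h2] at hab
        exact hinj ha hb hab
    obtain ⟨c₂, hc₂, hc₂0, hc₂end⟩ := ih (Function.update f i t) hrest hinj'
    obtain ⟨c, hc, hc0, hcend⟩ := recolorSeq_trans hc₁ hc₂ (by rw [hc₁end', hc₂0])
    rw [List.map_cons, List.sum_cons]
    exact ⟨c, hc, by rw [hc0, hc₁0], by rw [hcend, hc₂end]; rfl⟩

end Exec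

/-- if `ψ` is a `χ(G)`-coloring and every `ℓ`-coloring of `G` (`ℓ > χ(G)`)
can be recolored, each vertex at most `p` times, to a coloring inducing the same color
classes as `ψ`, then `R_ℓ(G)` is connected with diameter at most `(2p + 2)·n`. -/
theorem stmt7 {V : Type*} [Fintype V] (G : SimpleGraph V) (ℓ k p : ℕ)
    (hk : G.chromaticNumber = (k : ℕ∞)) (hl : k < ℓ)
    (ψ : V → Fin k) (hψ : IsProperColoring G k ψ)
    (hyp : ∀ φ : V → Fin ℓ, IsProperColoring G ℓ φ →
      ∃ m c, IsRecolorSeq G ℓ m c ∧ c 0 = φ ∧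
        (∀ a b : V, c m a = c m b ↔ ψ a = ψ b) ∧
        ∀ a : V, recolorCount m c a ≤ p) :
    ∀ φ₁ φ₂ : V → Fin ℓ, IsProperColoring G ℓ φ₁ → IsProperColoring G ℓ φ₂ →
      ∃ m c, IsRecolorSeq G ℓ m c ∧ c 0 = φ₁ ∧ c m = φ₂ ∧
        m ≤ (2 * p + 2) * Fintype.card V := by
  classical
  intro φ₁ φ₂ hφ₁ hφ₂
  set n := Fintype.card V with hn
  have hℓpos : 0 < ℓ := by omega
  -- process the two endpoint colorings via the hypothesis, then compress
  obtain ⟨m₁, c₁, h₁seq, h₁0, h₁cls, h₁cnt⟩ := hyp φ₁ hφ₁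
  obtain ⟨m₂, c₂, h₂seq, h₂0, h₂cls, h₂cnt⟩ := hyp φ₂ hφ₂
  obtain ⟨m₁', d₁, hd₁seq, hd₁0, hd₁end, hd₁le⟩ := recolorSeq_compress m₁ c₁ h₁seq
  obtain ⟨m₂', d₂, hd₂seq, hd₂0, hd₂end, hd₂le⟩ := recolorSeq_compress m₂ c₂ h₂seq
  have hm₁' : m₁' ≤ n * p := by
    calc m₁' ≤ ∑ a : V, recolorCount m₁ c₁ a := hd₁le
      _ ≤ ∑ _a : V, p := Finset.sum_le_sum fun a _ => h₁cnt a
      _ = n * p := by rw [Finset.sum_const, Finset.card_univ, smul_eq_mul]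
  have hm₂' : m₂' ≤ n * p := by
    calc m₂' ≤ ∑ a : V, recolorCount m₂ c₂ a := hd₂le
      _ ≤ ∑ _a : V, p := Finset.sum_le_sum fun a _ => h₂cnt a
      _ = n * p := by rw [Finset.sum_const, Finset.card_univ, smul_eq_mul]
  set τ₁ := c₁ m₁ with hτ₁
  set τ₂ := c₂ m₂ with hτ₂
  -- the two target colorings as functions on color classes
  set S : Finset (Fin k) := Finset.univ.image ψ with hSdef
  have hmemS : ∀ v : V, ψ v ∈ S := fun v => by simp [hSdef]
  set F : Fin k → Fin ℓ :=
    fun i => if h : ∃ v, ψ v = i then τ₁ h.choose else ⟨0, hℓpos⟩ with hFdef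
  set Gf : Fin k → Fin ℓ :=
    fun i => if h : ∃ v, ψ v = i then τ₂ h.choose else ⟨0, hℓpos⟩ with hGdef
  have hFψ : ∀ v, F (ψ v) = τ₁ v := by
    intro v
    have h : ∃ w, ψ w = ψ v := ⟨v, rfl⟩
    rw [hFdef]
    simp only [dif_pos h]
    exact (h₁cls h.choose v).mpr h.choose_spec
  have hGψ : ∀ v, Gf (ψ v) = τ₂ v := by
    intro v
    have h : ∃ w, ψ w = ψ v := ⟨v, rfl⟩
    rw [hGdef]
    simp only [dif_pos h]
    exact (h₂cls h.choose v).mpr h.choose_spec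
  have hFinj : Set.InjOn F S := by
    intro x hx y hy hxy
    obtain ⟨u, -, hu⟩ := Finset.mem_image.mp hx
    obtain ⟨w, -, hw⟩ := Finset.mem_image.mp hy
    subst hu; subst hw
    rw [hFψ, hFψ] at hxy
    exact (h₁cls u w).mp hxy
  have hGinj : Set.InjOn Gf S := by
    intro x hx y hy hxy
    obtain ⟨u, -, hu⟩ := Finset.mem_image.mp hx
    obtain ⟨w, -, hw⟩ := Finset.mem_image.mp hy
    subst hu; subst hw
    rw [hGψ, hGψ] at hxy
    exact (h₂cls u w).mp hxy
  have hScard : S.card < (Finset.univ : Finset (Fin ℓ)).card := by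
    calc S.card ≤ Fintype.card (Fin k) := Finset.card_le_univ S
      _ = k := Fintype.card_fin k
      _ < ℓ := hl
      _ = (Finset.univ : Finset (Fin ℓ)).card := by rw [Finset.card_univ, Fintype.card_fin]
  -- route between the two class functions
  obtain ⟨L, hvalid, hagree, hcount, -⟩ :=
    route_aux (S.card * (Fintype.card (Fin k) + 1) +
      (S.filter fun i => F i ∈ S.image Gf).card) S Finset.univ F Gf le_rfl
      hFinj hGinj (fun i _ => Finset.mem_univ _) (fun i _ => Finset.mem_univ _) hScard
  obtain ⟨e, he, he0, heend⟩ := exec ψ hψ L F hvalid hFinj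
  set W := (L.map fun q => (Finset.univ.filter fun v => ψ v = q.1).card).sum with hWdef
  have he0' : e 0 = τ₁ := by rw [he0]; funext v; exact hFψ v
  have heend' : e W = τ₂ := by
    rw [heend]; funext v
    show applyMoves F L (ψ v) = τ₂ v
    rw [hagree (ψ v) (hmemS v), hGψ]
  -- bound the middle part
  have hW : W ≤ 2 * n := by
    set wt : Fin k → ℕ := fun i => (Finset.univ.filter fun v => ψ v = i).card with hwt
    have hWlist : W = ((L.map Prod.fst).map wt).sum := by
      rw [hWdef, List.map_map]; rfl
    have hmoversS : ∀ i ∈ (L.map Prod.fst).toFinset, i ∈ S := by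
      intro i hi
      obtain ⟨q, hq, hqe⟩ := List.mem_map.mp (List.mem_toFinset.mp hi)
      rw [← hqe]
      exact validFrom_movers _ _ L F hvalid q hq
    have hpart : ∑ i ∈ S, wt i = n := by
      rw [hn, ← Finset.card_univ]
      exact (Finset.card_eq_sum_card_fiberwise fun v _ => hmemS v).symm
    calc W = ∑ i ∈ (L.map Prod.fst).toFinset, (L.map Prod.fst).count i • wt i := by
          rw [hWlist]; exact Finset.sum_list_map_count _ _
      _ ≤ ∑ i ∈ (L.map Prod.fst).toFinset, 2 * wt i := by
          apply Finset.sum_le_sum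
          intro i _
          rw [smul_eq_mul]
          exact Nat.mul_le_mul_right _ (hcount i)
      _ ≤ ∑ i ∈ S, 2 * wt i := by
          apply Finset.sum_le_sum_of_subset_of_nonneg
          · intro i hi; exact hmoversS i hi
          · intro i _ _; exact Nat.zero_le _
      _ = 2 * ∑ i ∈ S, wt i := by rw [Finset.mul_sum]
      _ = 2 * n := by rw [hpart]
  -- assemble the three pieces
  obtain ⟨d₂', hd₂'seq, hd₂'0, hd₂'end⟩ := recolorSeq_symm hd₂seq
  obtain ⟨cA, hcA, hcA0, hcAend⟩ := recolorSeq_trans hd₁seq he (by rw [hd₁end, he0'])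
  obtain ⟨cB, hcB, hcB0, hcBend⟩ := recolorSeq_trans hcA hd₂'seq
    (by rw [hcAend, heend', hd₂'0, hd₂end])
  refine ⟨m₁' + W + m₂', cB, hcB, ?_, ?_, ?_⟩
  · rw [hcB0, hcA0, hd₁0, h₁0]
  · rw [hcBend, hd₂'end, hd₂0, h₂0]
  · have harith : (2 * p + 2) * n = n * p + 2 * n + n * p := by ring
    rw [harith]
    omega
end

section
/- Let G be a graph, ℓ > χ(G), and S ⊆ V(G) an independent set with χ(G) = χ(G−S) + 1. Suppose (i) from any ℓ-coloring of G one can recolor each vertex at most f(n) times to reach an ℓ-coloring in which all vertices of S get a common color not used on G−S, and (ii) between any two (ℓ−1)-colorings of H := G−S there is a path in R_{ℓ−1}(H) recoloring each vertex at most g(|V(H)|) times. Then between any two ℓ-colorings of G there is a path in R_ℓ(G) recoloring each vertex at most 2[f(n) + g(|V(H)|)] + 2 times. -/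
open SimpleGraph

namespace Stmt8Aux

def skip {n : ℕ} (c : Fin n) (x : Fin (n - 1)) : Fin n :=
  if (x : ℕ) < (c : ℕ) then ⟨x, by have := c.isLt; omega⟩
  else ⟨x + 1, by have := x.isLt; omega⟩

def unskip {n : ℕ} (c y : Fin n) (h : y ≠ c) : Fin (n - 1) :=
  if hlt : (y : ℕ) < (c : ℕ) then ⟨y, by have := c.isLt; omega⟩
  else ⟨y - 1, by
    have := y.isLt
    have hc : (y : ℕ) ≠ (c : ℕ) := fun hh => h (Fin.ext hh)
    omega⟩

theorem skip_ne {n : ℕ} (c : Fin n) (x : Fin (n - 1)) : skip c x ≠ c := by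
  unfold skip; split <;> (intro h; rw [Fin.ext_iff] at h; simp at h; omega)

theorem skip_unskip {n : ℕ} (c y : Fin n) (h : y ≠ c) : skip c (unskip c y h) = y := by
  have hc : (y : ℕ) ≠ (c : ℕ) := fun hh => h (Fin.ext hh)
  have := y.isLt
  unfold skip unskip
  split <;> (rw [Fin.ext_iff] <;> simp <;> split <;> simp <;> omega)

theorem unskip_skip {n : ℕ} (c : Fin n) (x : Fin (n - 1)) (h : skip c x ≠ c) :
    unskip c (skip c x) h = x := by
  have := x.isLt
  unfold unskip skip
  rw [Fin.ext_iff]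
  split <;> simp <;> split <;> simp <;> omega

theorem skip_inj {n : ℕ} (c : Fin n) {x y : Fin (n - 1)} (h : skip c x = skip c y) : x = y := by
  have := x.isLt; have := y.isLt
  rw [Fin.ext_iff] at h ⊢
  unfold skip at h
  split at h <;> split at h <;> simp at h <;> omega

theorem unskip_inj {n : ℕ} (c y y' : Fin n) (h : y ≠ c) (h' : y' ≠ c)
    (e : unskip c y h = unskip c y' h') : y = y' := by
  have := congrArg (skip c) e
  rwa [skip_unskip, skip_unskip] at this


theorem concat {V : Type*} (G : SimpleGraph V) (ℓ m₁ m₂ : ℕ) (c₁ c₂ : ℕ → V → Fin ℓ)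
    (h₁ : IsRecolorSeq G ℓ m₁ c₁) (h₂ : IsRecolorSeq G ℓ m₂ c₂) (hj : c₁ m₁ = c₂ 0) :
    ∃ c, IsRecolorSeq G ℓ (m₁ + m₂) c ∧ c 0 = c₁ 0 ∧ c (m₁ + m₂) = c₂ m₂ ∧
      ∀ a, recolorCount (m₁ + m₂) c a ≤ recolorCount m₁ c₁ a + recolorCount m₂ c₂ a := by
  classical
  set c : ℕ → V → Fin ℓ := fun i => if i ≤ m₁ then c₁ i else c₂ (i - m₁) with hc
  have hlow : ∀ i ≤ m₁, c i = c₁ i := fun i hi => by simp [hc, hi]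
  have hhigh : ∀ i, m₁ ≤ i → c i = c₂ (i - m₁) := by
    intro i hi
    rcases eq_or_lt_of_le hi with rfl | hlt
    · simp [hc, hj]
    · simp [hc, Nat.not_le.mpr hlt, hlt]
  refine ⟨c, ⟨?_, ?_⟩, hlow 0 (Nat.zero_le _), by rw [hhigh _ (Nat.le_add_right _ _)]; simp, ?_⟩
  · intro i hi
    by_cases h : i ≤ m₁
    · rw [hlow i h]; exact h₁.1 i h
    · rw [hhigh i (le_of_not_ge h)]; exact h₂.1 _ (by omega)
  · intro i hi a b hab ha
    by_cases h : i < m₁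
    · rw [hlow i (le_of_lt h), hlow (i+1) h] at ha ⊢
      exact h₁.2 i h a b hab ha
    · have h' : m₁ ≤ i := le_of_not_gt h
      rw [hhigh i h', hhigh (i+1) (by omega)] at ha ⊢
      have e : i + 1 - m₁ = (i - m₁) + 1 := by omega
      rw [e] at ha ⊢
      exact h₂.2 (i - m₁) (by omega) a b hab ha
  · intro a
    unfold recolorCount
    have hsplit : Finset.range (m₁ + m₂) = Finset.range m₁ ∪ Finset.Ico m₁ (m₁ + m₂) := by
      rw [Finset.range_eq_Ico, Finset.range_eq_Ico]
      exact (Finset.Ico_union_Ico_eq_Ico (Nat.zero_le m₁) (Nat.le_add_right m₁ m₂)).symm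
    rw [hsplit, Finset.filter_union]
    refine le_trans (Finset.card_union_le _ _) (Nat.add_le_add ?_ ?_)
    · apply le_of_eq
      congr 1
      apply Finset.filter_congr
      intro i hi
      rw [Finset.mem_range] at hi
      rw [hlow i (le_of_lt hi), hlow (i+1) hi]
    · apply Finset.card_le_card_of_injOn (fun i => i - m₁)
      · intro i hi
        rw [Finset.mem_coe, Finset.mem_filter, Finset.mem_Ico] at hi
        obtain ⟨⟨hi1, hi2⟩, hne⟩ := hi
        rw [hhigh i hi1, hhigh (i+1) (by omega)] at hne
        have e : i + 1 - m₁ = (i - m₁) + 1 := by omega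
        rw [e] at hne
        rw [Finset.mem_coe, Finset.mem_filter, Finset.mem_range]
        exact ⟨by dsimp only; omega, hne⟩
      · intro i hi j hj hij
        rw [Finset.coe_filter] at hi hj
        simp only [Set.mem_setOf_eq, Finset.mem_Ico] at hi hj
        have hij' : i - m₁ = j - m₁ := hij
        omega

theorem rev {V : Type*} (G : SimpleGraph V) (ℓ m : ℕ) (c : ℕ → V → Fin ℓ)
    (h : IsRecolorSeq G ℓ m c) :
    ∃ c', IsRecolorSeq G ℓ m c' ∧ c' 0 = c m ∧ c' m = c 0 ∧
      ∀ a, recolorCount m c' a ≤ recolorCount m c a := by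
  refine ⟨fun i => c (m - i), ⟨?_, ?_⟩, by simp, by simp, ?_⟩
  · intro i _; exact h.1 _ (by omega)
  · intro i hi a b hab ha
    dsimp only at ha ⊢
    have e : m - i = (m - (i+1)) + 1 := by omega
    rw [e] at ha ⊢
    exact (h.2 (m - (i+1)) (by omega) a b hab (fun hh => ha hh.symm )).symm
  · intro a
    unfold recolorCount
    apply Finset.card_le_card_of_injOn (fun i => m - 1 - i)
    · intro i hi
      rw [Finset.mem_coe, Finset.mem_filter, Finset.mem_range] at hi
      obtain ⟨hi1, hne⟩ := hi
      dsimp only at hne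
      rw [Finset.mem_coe, Finset.mem_filter, Finset.mem_range]
      have e1 : m - i = (m - 1 - i) + 1 := by omega
      have e2 : m - (i + 1) = m - 1 - i := by omega
      rw [e1, e2] at hne
      exact ⟨by dsimp only; omega, fun hh => hne (by rw [hh])⟩
    · intro i hi j hj hij
      rw [Finset.coe_filter] at hi hj
      simp only [Set.mem_setOf_eq, Finset.mem_range] at hi hj
      have hij' : m - 1 - i = m - 1 - j := hij
      omega


theorem lift {V : Type*} (G : SimpleGraph V) (S : Set V) (ℓ m : ℕ)
    (hind : ∀ x ∈ S, ∀ y ∈ S, ¬ G.Adj x y)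
    (c' : ℕ → ↥(Sᶜ) → Fin (ℓ - 1)) (h : IsRecolorSeq (G.induce Sᶜ) (ℓ - 1) m c')
    (emb : Fin (ℓ - 1) → Fin ℓ) (hembinj : Function.Injective emb)
    (col : Fin ℓ) (hcol : ∀ x, emb x ≠ col) :
    ∃ c, IsRecolorSeq G ℓ m c ∧
      (∀ i (v : V) (hv : v ∈ Sᶜ), c i v = emb (c' i ⟨v, hv⟩)) ∧
      (∀ i, ∀ v ∈ S, c i v = col) ∧
      (∀ (a : V) (ha : a ∈ Sᶜ), recolorCount m c a ≤ recolorCount m c' ⟨a, ha⟩) ∧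
      (∀ a ∈ S, recolorCount m c a = 0) := by
  classical
  set c : ℕ → V → Fin ℓ := fun i v => if hv : v ∈ Sᶜ then emb (c' i ⟨v, hv⟩) else col with hcdef
  have hS : ∀ i, ∀ v ∈ S, c i v = col := by
    intro i v hv
    simp only [hcdef]
    rw [dif_neg (by simpa using hv)]
  have hSc : ∀ i (v : V) (hv : v ∈ Sᶜ), c i v = emb (c' i ⟨v, hv⟩) := by
    intro i v hv
    simp only [hcdef]
    rw [dif_pos hv]
  have hcount0 : ∀ a ∈ S, recolorCount m c a = 0 := by
    intro a ha
    unfold recolorCount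
    rw [Finset.card_eq_zero, Finset.filter_eq_empty_iff]
    intro i _
    rw [hS i a ha, hS (i+1) a ha]
    simp
  refine ⟨c, ⟨?_, ?_⟩, hSc, hS, ?_⟩
  · intro i hi a b hab
    by_cases ha : a ∈ Sᶜ <;> by_cases hb : b ∈ Sᶜ
    · rw [hSc i a ha, hSc i b hb]
      intro hcc
      have hadj : (G.induce Sᶜ).Adj ⟨a, ha⟩ ⟨b, hb⟩ := by
        simp only [SimpleGraph.comap_adj, Function.Embedding.coe_subtype]
        exact hab
      exact h.1 i hi hadj (hembinj hcc)
    · rw [hSc i a ha, hS i b (by simpa using hb)]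
      exact hcol _
    · rw [hS i a (by simpa using ha), hSc i b hb]
      exact (hcol _).symm
    · exact absurd hab (hind a (by simpa using ha) b (by simpa using hb))
  · intro i hi a b hne hca
    by_cases ha : a ∈ Sᶜ
    · by_cases hb : b ∈ Sᶜ
      · rw [hSc i a ha, hSc (i+1) a ha] at hca
        rw [hSc i b hb, hSc (i+1) b hb]
        have : c' i ⟨b, hb⟩ = c' (i+1) ⟨b, hb⟩ := by
          refine h.2 i hi ⟨a, ha⟩ ⟨b, hb⟩ (by simp [hne]) (fun hh => hca (by rw [hh]))
        rw [this]
      · rw [hS i b (by simpa using hb), hS (i+1) b (by simpa using hb)]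
    · exact absurd (by rw [hS i a (by simpa using ha), hS (i+1) a (by simpa using ha)]) hca
  · refine ⟨?_, hcount0⟩
    intro a ha
    unfold recolorCount
    apply Finset.card_le_card
    apply Finset.monotone_filter_right
    intro i _ hi
    rw [hSc i a ha, hSc (i+1) a ha] at hi
    exact fun hh => hi (by rw [hh])

theorem sphase {V : Type*} [Fintype V] (G : SimpleGraph V) (S : Set V) (ℓ : ℕ)
    (hind : ∀ x ∈ S, ∀ y ∈ S, ¬ G.Adj x y)
    (base : V → Fin ℓ) (col₁ col₂ : Fin ℓ)
    (hb1 : ∀ v ∈ S, base v = col₁)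
    (hb2 : ∀ v ∉ S, base v ≠ col₁ ∧ base v ≠ col₂)
    (hpr : IsProperColoring G ℓ base) :
    ∃ mm c, IsRecolorSeq G ℓ mm c ∧ c 0 = base ∧
      (∀ v ∈ S, c mm v = col₂) ∧ (∀ v ∉ S, c mm v = base v) ∧
      ∀ a, recolorCount mm c a ≤ 1 := by
  classical
  obtain ⟨eV⟩ := Fintype.truncEquivFin V
  set mm := Fintype.card V with hmm
  set c : ℕ → V → Fin ℓ := fun i v => if v ∈ S ∧ (eV v : ℕ) < i then col₂ else base v with hcdef
  have hval : ∀ i v, c i v = col₂ ∨ c i v = base v := by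
    intro i v; by_cases h : v ∈ S ∧ (eV v : ℕ) < i <;> simp [hcdef, h]
  have hproper : ∀ i, IsProperColoring G ℓ (c i) := by
    intro i a b hadj
    have hnab : ¬ (a ∈ S ∧ b ∈ S) := fun ⟨h1, h2⟩ => hind a h1 b h2 hadj
    by_cases ha : a ∈ S ∧ (eV a : ℕ) < i <;> by_cases hb : b ∈ S ∧ (eV b : ℕ) < i <;>
      simp only [hcdef, ha, hb, if_pos, if_neg, if_true, if_false]
    · exact absurd ⟨ha.1, hb.1⟩ hnab
    · have hbS : b ∉ S := fun hh => hnab ⟨ha.1, hh⟩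
      exact fun hh => (hb2 b hbS).2 hh.symm
    · have haS : a ∉ S := fun hh => hnab ⟨hh, hb.1⟩
      exact (hb2 a haS).2
    · exact hpr hadj
  have hflip : ∀ i (v : V), c i v ≠ c (i+1) v → v ∈ S ∧ (eV v : ℕ) = i := by
    intro i v hv
    by_cases h1 : v ∈ S ∧ (eV v : ℕ) < i
    · exfalso; apply hv
      have h2 : v ∈ S ∧ (eV v : ℕ) < i + 1 := ⟨h1.1, by omega⟩
      simp only [hcdef]
      rw [if_pos h1, if_pos h2]
    · by_cases h2 : v ∈ S ∧ (eV v : ℕ) < i + 1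
      · refine ⟨h2.1, ?_⟩
        have h3 := h2.2
        have h4 : ¬ ((eV v : ℕ) < i) := fun hh => h1 ⟨h2.1, hh⟩
        omega
      · exfalso; apply hv
        simp only [hcdef]
        rw [if_neg h1, if_neg h2]
  refine ⟨mm, c, ⟨fun i _ => hproper i, ?_⟩, ?_, ?_, ?_, ?_⟩
  · intro i hi a b hne hca
    obtain ⟨haS, hai⟩ := hflip i a hca
    have hbi : (eV b : ℕ) ≠ i := by
      intro hh
      exact hne (eV.injective (Fin.ext (by rw [hai, hh])))
    have : (b ∈ S ∧ (eV b : ℕ) < i) ↔ (b ∈ S ∧ (eV b : ℕ) < i + 1) := by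
      constructor <;> (intro ⟨h1, h2⟩; exact ⟨h1, by omega⟩)
    by_cases hb : b ∈ S ∧ (eV b : ℕ) < i
    · simp only [hcdef]; rw [if_pos hb, if_pos (this.mp hb)]
    · simp only [hcdef]; rw [if_neg hb, if_neg (fun hh => hb (this.mpr hh))]
  · funext v; simp [hcdef]
  · intro v hv; simp [hcdef, hv, (eV v).isLt]
  · intro v hv; simp [hcdef, hv]
  · intro a
    unfold recolorCount
    calc ((Finset.range mm).filter fun i => c i a ≠ c (i+1) a).card
        ≤ ({(eV a : ℕ)} : Finset ℕ).card := by
          apply Finset.card_le_card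
          intro i hi
          rw [Finset.mem_filter] at hi
          rw [Finset.mem_singleton]
          exact ((hflip i a hi.2).2).symm
      _ = 1 := Finset.card_singleton _

end Stmt8Aux

/-- let `S` be an independent set of `G` with `χ(G) = χ(G−S) + 1` and
`ℓ > χ(G)`. If (i) from any `ℓ`-coloring of `G` one can recolor each vertex at most `fN`
times to reach an `ℓ`-coloring where all of `S` gets a common color unused on `G−S`, and
(ii) between any two `(ℓ−1)`-colorings of `H := G−S` there is a path in `R_{ℓ−1}(H)`
recoloring each vertex at most `gN` times, then between any two `ℓ`-colorings of `G` there
is a path in `R_ℓ(G)` recoloring each vertex at most `2(fN + gN) + 2` times. -/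
theorem stmt8 {V : Type*} [Fintype V] (G : SimpleGraph V) (S : Set V) (ℓ fN gN : ℕ)
    (hind : ∀ x ∈ S, ∀ y ∈ S, ¬ G.Adj x y)
    (hχ : G.chromaticNumber = (G.induce Sᶜ).chromaticNumber + 1)
    (hl : G.chromaticNumber < (ℓ : ℕ∞))
    (hi : ∀ φ : V → Fin ℓ, IsProperColoring G ℓ φ →
      ∃ m c, IsRecolorSeq G ℓ m c ∧ c 0 = φ ∧ (∀ a : V, recolorCount m c a ≤ fN) ∧
        ∃ col : Fin ℓ, (∀ s ∈ S, c m s = col) ∧ ∀ x ∉ S, c m x ≠ col)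
    (hii : ∀ φ' ψ' : ↥(Sᶜ) → Fin (ℓ - 1),
      IsProperColoring (G.induce Sᶜ) (ℓ - 1) φ' → IsProperColoring (G.induce Sᶜ) (ℓ - 1) ψ' →
      ∃ m c, IsRecolorSeq (G.induce Sᶜ) (ℓ - 1) m c ∧ c 0 = φ' ∧ c m = ψ' ∧
        ∀ a, recolorCount m c a ≤ gN) :
    ∀ φ ψ : V → Fin ℓ, IsProperColoring G ℓ φ → IsProperColoring G ℓ ψ →
      ∃ m c, IsRecolorSeq G ℓ m c ∧ c 0 = φ ∧ c m = ψ ∧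
        ∀ a : V, recolorCount m c a ≤ 2 * (fN + gN) + 2 := by
  classical
  intro φ ψ hφ hψ
  -- numeric facts
  obtain ⟨k, hk⟩ : ∃ k : ℕ, (G.induce Sᶜ).chromaticNumber = (k : ℕ∞) := by
    have hne : (G.induce Sᶜ).chromaticNumber ≠ ⊤ := by
      intro h
      rw [h] at hχ
      rw [hχ] at hl
      simp at hl
    obtain ⟨a, ha⟩ := WithTop.ne_top_iff_exists.mp hne
    exact ⟨a, ha.symm⟩
  have hkl : k + 2 ≤ ℓ := by
    rw [hk] at hχ
    rw [hχ] at hl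
    have h1 : ((k + 1 : ℕ) : ℕ∞) < (ℓ : ℕ∞) := by push_cast; exact hl
    have h2 : k + 1 < ℓ := by exact_mod_cast h1
    omega
  have hl2 : 2 ≤ ℓ := by omega
  have hcolor : (G.induce Sᶜ).Colorable k := by
    rw [← SimpleGraph.chromaticNumber_le_iff_colorable, hk]
  obtain ⟨θ₀⟩ := hcolor
  -- apply (i) to both sides
  obtain ⟨m₁, cφ, hseqφ, hcφ0, hcφcnt, col₁, hS1, hH1⟩ := hi φ hφ
  obtain ⟨m₅, cψ, hseqψ, hcψ0, hcψcnt, col₂, hS2, hH2⟩ := hi ψ hψ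
  -- the auxiliary color c2'
  obtain ⟨c2', hc2'⟩ : ∃ c2' : Fin (ℓ - 1), Stmt8Aux.skip col₁ c2' = col₂ ∨ col₂ = col₁ := by
    by_cases hcc : col₂ = col₁
    · exact ⟨⟨0, by omega⟩, Or.inr hcc⟩
    · exact ⟨Stmt8Aux.unskip col₁ col₂ hcc, Or.inl (Stmt8Aux.skip_unskip _ _ _)⟩
  have hkle : k ≤ (ℓ - 1) - 1 := by omega
  -- the middle coloring θ, avoiding col₁ and col₂
  set θ : ↥(Sᶜ) → Fin ℓ :=
    fun v => Stmt8Aux.skip col₁ (Stmt8Aux.skip c2' (Fin.castLE hkle (θ₀ v))) with hθdef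
  have hθ1 : ∀ v, θ v ≠ col₁ := fun v => Stmt8Aux.skip_ne _ _
  have hθ2 : ∀ v, θ v ≠ col₂ := by
    intro v h
    rcases hc2' with hc | hc
    · rw [← hc] at h
      exact Stmt8Aux.skip_ne c2' _ (Stmt8Aux.skip_inj col₁ h)
    · exact hθ1 v (by rw [h, hc])
  have hθadj : ∀ a b : ↥(Sᶜ), (G.induce Sᶜ).Adj a b → θ a ≠ θ b := by
    intro a b hadj h
    apply θ₀.valid hadj
    have h1 := Stmt8Aux.skip_inj c2' (Stmt8Aux.skip_inj col₁ h)
    have h2 := congrArg Fin.val h1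
    simp only [Fin.coe_castLE] at h2
    exact Fin.ext h2
  -- adjacency transfer
  have hadjG : ∀ a b : ↥(Sᶜ), (G.induce Sᶜ).Adj a b → G.Adj ↑a ↑b := by
    intro a b hadj
    simpa using hadj
  -- the four colorings of H with ℓ-1 colors
  have hmemS : ∀ v : ↥(Sᶜ), (v : V) ∉ S := fun v => v.2
  set φ' : ↥(Sᶜ) → Fin (ℓ - 1) :=
    fun v => Stmt8Aux.unskip col₁ (cφ m₁ v) (hH1 v (hmemS v)) with hφ'def
  set θ'₁ : ↥(Sᶜ) → Fin (ℓ - 1) := fun v => Stmt8Aux.unskip col₁ (θ v) (hθ1 v) with hθ1def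
  set θ'₂ : ↥(Sᶜ) → Fin (ℓ - 1) := fun v => Stmt8Aux.unskip col₂ (θ v) (hθ2 v) with hθ2def
  set ψ' : ↥(Sᶜ) → Fin (ℓ - 1) :=
    fun v => Stmt8Aux.unskip col₂ (cψ m₅ v) (hH2 v (hmemS v)) with hψ'def
  have hφ'p : IsProperColoring (G.induce Sᶜ) (ℓ - 1) φ' := by
    intro a b hadj h
    exact hseqφ.1 m₁ le_rfl (hadjG a b hadj) (Stmt8Aux.unskip_inj col₁ _ _ _ _ h)
  have hθ'₁p : IsProperColoring (G.induce Sᶜ) (ℓ - 1) θ'₁ := by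
    intro a b hadj h
    exact hθadj a b hadj (Stmt8Aux.unskip_inj col₁ _ _ _ _ h)
  have hθ'₂p : IsProperColoring (G.induce Sᶜ) (ℓ - 1) θ'₂ := by
    intro a b hadj h
    exact hθadj a b hadj (Stmt8Aux.unskip_inj col₂ _ _ _ _ h)
  have hψ'p : IsProperColoring (G.induce Sᶜ) (ℓ - 1) ψ' := by
    intro a b hadj h
    exact hseqψ.1 m₅ le_rfl (hadjG a b hadj) (Stmt8Aux.unskip_inj col₂ _ _ _ _ h)
  -- segment B : lift of path from φ' to θ'₁
  obtain ⟨m₂, cH1, hseqH1, hH10, hH1m, hH1cnt⟩ := hii φ' θ'₁ hφ'p hθ'₁p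
  obtain ⟨L₁, hseqL1, hL1Sc, hL1S, hL1cnt, hL1cnt0⟩ :=
    Stmt8Aux.lift G S ℓ m₂ hind cH1 hseqH1 (Stmt8Aux.skip col₁)
      (fun x y h => Stmt8Aux.skip_inj col₁ h) col₁ (fun x => Stmt8Aux.skip_ne _ _)
  -- segment D : lift of path from θ'₂ to ψ'
  obtain ⟨m₄, cH2, hseqH2, hH20, hH2m, hH2cnt⟩ := hii θ'₂ ψ' hθ'₂p hψ'p
  obtain ⟨L₂, hseqL2, hL2Sc, hL2S, hL2cnt, hL2cnt0⟩ :=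
    Stmt8Aux.lift G S ℓ m₄ hind cH2 hseqH2 (Stmt8Aux.skip col₂)
      (fun x y h => Stmt8Aux.skip_inj col₂ h) col₂ (fun x => Stmt8Aux.skip_ne _ _)
  -- segment C : recolor S from col₁ to col₂
  have hb1 : ∀ v ∈ S, L₁ m₂ v = col₁ := fun v hv => hL1S m₂ v hv
  have hb2 : ∀ v ∉ S, L₁ m₂ v ≠ col₁ ∧ L₁ m₂ v ≠ col₂ := by
    intro v hv
    have hvc : v ∈ Sᶜ := by simpa using hv
    rw [hL1Sc m₂ v hvc, hH1m]
    rw [hθ1def]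
    simp only []
    rw [Stmt8Aux.skip_unskip col₁ (θ ⟨v, hvc⟩) (hθ1 ⟨v, hvc⟩)]
    exact ⟨hθ1 _, hθ2 _⟩
  obtain ⟨m₃, cS, hseqS, hS0, hSm1, hSm2, hScnt⟩ :=
    Stmt8Aux.sphase G S ℓ hind (L₁ m₂) col₁ col₂ hb1 hb2 (hseqL1.1 m₂ le_rfl)
  -- segment E : reverse of the ψ path
  obtain ⟨cE, hseqE, hE0, hEm, hEcnt⟩ := Stmt8Aux.rev G ℓ m₅ cψ hseqψ
  -- junctions
  have hj1 : cφ m₁ = L₁ 0 := by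
    funext v
    by_cases hv : v ∈ Sᶜ
    · rw [hL1Sc 0 v hv, hH10]
      rw [hφ'def]
      simp only []
      rw [Stmt8Aux.skip_unskip]
    · rw [hL1S 0 v (by simpa using hv), hS1 v (by simpa using hv)]
  have hj2 : L₁ m₂ = cS 0 := hS0.symm
  have hj3 : cS m₃ = L₂ 0 := by
    funext v
    by_cases hv : v ∈ Sᶜ
    · have hvS : v ∉ S := by simpa using hv
      rw [hSm2 v hvS, hL2Sc 0 v hv, hH20]
      rw [hL1Sc m₂ v hv, hH1m]
      rw [hθ1def, hθ2def]
      simp only []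
      rw [Stmt8Aux.skip_unskip, Stmt8Aux.skip_unskip]
    · have hvS : v ∈ S := by simpa using hv
      rw [hSm1 v hvS, hL2S 0 v hvS]
  have hj4 : L₂ m₄ = cE 0 := by
    rw [hE0]
    funext v
    by_cases hv : v ∈ Sᶜ
    · rw [hL2Sc m₄ v hv, hH2m]
      rw [hψ'def]
      simp only []
      rw [Stmt8Aux.skip_unskip]
    · rw [hL2S m₄ v (by simpa using hv), hS2 v (by simpa using hv)]
  -- concatenate
  obtain ⟨cDE, hseqDE, hDE0, hDEm, hDEcnt⟩ :=
    Stmt8Aux.concat G ℓ m₄ m₅ L₂ cE hseqL2 hseqE hj4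
  obtain ⟨cCDE, hseqCDE, hCDE0, hCDEm, hCDEcnt⟩ :=
    Stmt8Aux.concat G ℓ m₃ (m₄ + m₅) cS cDE hseqS hseqDE (by rw [hDE0]; exact hj3)
  obtain ⟨cBCDE, hseqBCDE, hBCDE0, hBCDEm, hBCDEcnt⟩ :=
    Stmt8Aux.concat G ℓ m₂ (m₃ + (m₄ + m₅)) L₁ cCDE hseqL1 hseqCDE (by rw [hCDE0]; exact hj2)
  obtain ⟨cALL, hseqALL, hALL0, hALLm, hALLcnt⟩ :=
    Stmt8Aux.concat G ℓ m₁ (m₂ + (m₃ + (m₄ + m₅))) cφ cBCDE hseqφ hseqBCDE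
      (by rw [hBCDE0]; exact hj1)
  refine ⟨_, cALL, hseqALL, by rw [hALL0, hcφ0], by rw [hALLm, hBCDEm, hCDEm, hDEm, hEm, hcψ0], ?_⟩
  -- counts
  intro a
  have hbB : recolorCount m₂ L₁ a ≤ gN := by
    by_cases ha : a ∈ Sᶜ
    · exact le_trans (hL1cnt a ha) (hH1cnt _)
    · rw [hL1cnt0 a (by simpa using ha)]; exact Nat.zero_le _
  have hbD : recolorCount m₄ L₂ a ≤ gN := by
    by_cases ha : a ∈ Sᶜ
    · exact le_trans (hL2cnt a ha) (hH2cnt _)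
    · rw [hL2cnt0 a (by simpa using ha)]; exact Nat.zero_le _
  have h5 : recolorCount (m₄ + m₅) cDE a ≤ gN + fN :=
    le_trans (hDEcnt a) (Nat.add_le_add hbD (le_trans (hEcnt a) (hcψcnt a)))
  have h6 : recolorCount (m₃ + (m₄ + m₅)) cCDE a ≤ 1 + (gN + fN) :=
    le_trans (hCDEcnt a) (Nat.add_le_add (hScnt a) h5)
  have h7 : recolorCount (m₂ + (m₃ + (m₄ + m₅))) cBCDE a ≤ gN + (1 + (gN + fN)) :=
    le_trans (hBCDEcnt a) (Nat.add_le_add hbB h6)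
  have h8 := le_trans (hALLcnt a) (Nat.add_le_add (hcφcnt a) h7)
  omega
end
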